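/- arXiv:1010.1394 — 4 statements merged into one kernel-verified Lean document; each statement's English description precedes it below -/
import Mathlib

section
/- Let d ≥ 1, 0 < α ≤ 1/2, set k(α) = ⌈log₂(4√d/α)⌉ and t_{d,α}(ε) = 2^{-d}·t_{d,k(α)}(ε). Then there exists ε₀ > 0 (depending on d and α) such that for all ε ∈ [0, ε₀] one has t_{d,α}(ε) > c_d·α^d, where c_d = 2/(5·log 2·2^{4d}·d^{d/2}). In particular t_{d,α}(0) > c_d·α^d. -/
set_option maxHeartbeats 1000000


open MeasureTheory Filter Metric Set
open scoped ENNReal NNReal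

/-- `s_{d,k}(ε)`: the largest real solution `s` of
`(1−ε)·log((2^d−1)·(Σ_{i=1}^k 2^{-s·i})/(1−ε)) + ε·log(1/ε) = s·ε·log(2^k)`
(with the convention `0·log 0 = 0`). -/
noncomputable def sdk (d k : ℕ) (ε : ℝ) : ℝ :=
  sSup {s : ℝ |
    (1 - ε) * Real.log (((2 : ℝ) ^ d - 1) *
        (∑ i ∈ Finset.range k, (2 : ℝ) ^ (-(s * ((i : ℝ) + 1)))) / (1 - ε))
      + ε * Real.log (1 / ε) = s * ε * Real.log ((2 : ℝ) ^ k)}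

/-- `t_{d,k}(ε) = d − s_{d,k}(ε)`. -/
noncomputable def tdk (d k : ℕ) (ε : ℝ) : ℝ := d - sdk d k ε

noncomputable def gaux (d k : ℕ) (s : ℝ) : ℝ :=
  ((2 : ℝ) ^ d - 1) * ∑ i ∈ Finset.range k, (2 : ℝ) ^ (-(s * ((i : ℝ) + 1)))

lemma sdk_eq (d k : ℕ) (ε : ℝ) :
    sdk d k ε = sSup {s : ℝ |
      (1 - ε) * Real.log (gaux d k s / (1 - ε))
        + ε * Real.log (1 / ε) = s * ε * Real.log ((2 : ℝ) ^ k)} := rfl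

lemma gaux_pos (d k : ℕ) (hd : 1 ≤ d) (hk : 1 ≤ k) (s : ℝ) : 0 < gaux d k s := by
  unfold gaux
  apply mul_pos
  · nlinarith [pow_le_pow_right₀ (one_le_two (α := ℝ)) hd, pow_one (2:ℝ)]
  · apply Finset.sum_pos (fun i _ => Real.rpow_pos_of_pos two_pos _)
    exact ⟨0, Finset.mem_range.mpr (by omega)⟩

lemma gaux_anti (d k : ℕ) (hd : 1 ≤ d) {s t : ℝ} (hst : s ≤ t) :
    gaux d k t ≤ gaux d k s := by
  unfold gaux
  have h1 : (1:ℝ) ≤ (2:ℝ)^d - 1 := by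
    have := pow_le_pow_right₀ (one_le_two (α := ℝ)) hd
    rw [pow_one] at this; linarith
  apply mul_le_mul_of_nonneg_left _ (by linarith)
  apply Finset.sum_le_sum
  intro i _
  apply (Real.rpow_le_rpow_left_iff (x := 2) one_lt_two).mpr
  have : (0:ℝ) ≤ (i:ℝ) + 1 := by positivity
  nlinarith

/-- Let `d ≥ 1`, `0 < α ≤ 1/2`, `k(α) = ⌈log₂(4√d/α)⌉` and
`t_{d,α}(ε) = 2^{-d}·t_{d,k(α)}(ε)`. Then there is `ε₀ > 0` such that for all `ε ∈ [0,ε₀]`,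
`t_{d,α}(ε) > c_d·α^d`, where `c_d = 2/(5·log 2·2^{4d}·d^{d/2})`. In particular this holds
at `ε = 0`. -/
theorem tdalpha_lower_bound_near_zero (d : ℕ) (hd : 1 ≤ d) (α : ℝ)
    (hα : 0 < α) (hα' : α ≤ 1 / 2) :
    ∃ ε₀ > (0 : ℝ),
      (∀ ε ∈ Set.Icc (0 : ℝ) ε₀,
        2 / (5 * Real.log 2 * 2 ^ (4 * d) * (d : ℝ) ^ ((d : ℝ) / 2)) * α ^ d <
          ((2 : ℝ) ^ d)⁻¹ * tdk d (⌈Real.logb 2 (4 * Real.sqrt d / α)⌉₊) ε) ∧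
      2 / (5 * Real.log 2 * 2 ^ (4 * d) * (d : ℝ) ^ ((d : ℝ) / 2)) * α ^ d <
        ((2 : ℝ) ^ d)⁻¹ * tdk d (⌈Real.logb 2 (4 * Real.sqrt d / α)⌉₊) 0 := by
  have hd1 : (1:ℝ) ≤ (d:ℝ) := by exact_mod_cast hd
  set L := Real.log 2 with hLdef
  have hL0 : 0 < L := Real.log_pos one_lt_two
  have hL9 : 0.6931471803 < L := Real.log_two_gt_d9
  set sd := Real.sqrt d with hsddef
  have hsd1 : (1:ℝ) ≤ sd := by
    rw [hsddef, show (1:ℝ) = Real.sqrt 1 by simp]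
    exact Real.sqrt_le_sqrt hd1
  have hsd0 : 0 < sd := lt_of_lt_of_le one_pos hsd1
  have hypos : 0 < 4 * sd / α := by positivity
  have hx3 : (3:ℝ) ≤ Real.logb 2 (4 * sd / α) := by
    rw [Real.le_logb_iff_rpow_le one_lt_two hypos]
    have h8 : (2:ℝ) ^ (3:ℝ) = 8 := by
      rw [show (3:ℝ) = ((3:ℕ):ℝ) by norm_num, Real.rpow_natCast]; norm_num
    rw [h8, le_div_iff₀ hα]
    linarith
  have hx0 : (0:ℝ) ≤ Real.logb 2 (4 * sd / α) := by linarith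
  set k := ⌈Real.logb 2 (4 * sd / α)⌉₊ with hkdef
  have hk3 : 3 ≤ k := by
    have h2 : 2 < k := by
      rw [hkdef, Nat.lt_ceil]; push_cast; linarith
    omega
  have hdk3 : 3 ≤ d * k := le_trans hk3 (Nat.le_mul_of_pos_left k (by omega))
  have h2k : (2:ℝ) ^ k < 8 * sd / α := by
    have hceil : ((k:ℕ):ℝ) < Real.logb 2 (4 * sd / α) + 1 := by
      rw [hkdef]; exact Nat.ceil_lt_add_one hx0
    have h1 : (2:ℝ) ^ ((k:ℕ):ℝ) < (2:ℝ) ^ (Real.logb 2 (4 * sd / α) + 1) :=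
      (Real.rpow_lt_rpow_left_iff one_lt_two).mpr hceil
    rw [Real.rpow_natCast] at h1
    rw [Real.rpow_add two_pos, Real.rpow_logb two_pos (by norm_num) hypos,
      Real.rpow_one] at h1
    calc (2:ℝ) ^ k < 4 * sd / α * 2 := h1
      _ = 8 * sd / α := by ring
  -- main quantities
  set P : ℝ := (2:ℝ) ^ d with hPdef
  have hP2 : (2:ℝ) ≤ P := by
    rw [hPdef]
    calc (2:ℝ) = 2^1 := (pow_one 2).symm
      _ ≤ 2^d := pow_le_pow_right₀ one_le_two hd
  have hP0 : 0 < P := lt_of_lt_of_le two_pos hP2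
  have hPinv : P⁻¹ ≤ 1/2 := by
    rw [inv_le_comm₀ hP0 (by norm_num)]; linarith
  have hPinv0 : 0 < P⁻¹ := by positivity
  set Q : ℝ := (2:ℝ) ^ (d * k) with hQdef
  have hQ0 : 0 < Q := by positivity
  have hQ8 : (8:ℝ) ≤ Q := by
    rw [hQdef]
    calc (8:ℝ) = 2^3 := by norm_num
      _ ≤ 2^(d*k) := pow_le_pow_right₀ one_le_two hdk3
  set q : ℝ := Q⁻¹ with hqdef
  have hq0 : 0 < q := by positivity
  have hq8 : q ≤ 1/8 := by
    rw [hqdef, inv_le_comm₀ hQ0 (by norm_num)]; linarith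
  set w : ℝ := (1 - P⁻¹) * q with hwdef
  have hw0 : 0 < w := by
    apply mul_pos _ hq0; linarith
  have hw8 : w < 1/8 := by
    calc w < 1 * q := by
          rw [hwdef]
          apply mul_lt_mul_of_pos_right _ hq0
          linarith
      _ ≤ 1/8 := by linarith
  set δ : ℝ := 8 * w / (9 * L) with hδdef
  have hδ0 : 0 < δ := by positivity
  have hδhalf : δ < 1/2 := by
    rw [hδdef, div_lt_iff₀ (by positivity)]
    linarith
  set B : ℝ := (d:ℝ) - δ with hBdef
  have hB : 1/2 < B := by rw [hBdef]; linarith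
  -- geometric evaluation at B
  have hgB1 : gaux d k B < 1 := by
    set r : ℝ := (2:ℝ) ^ (-B) with hrdef
    have hr0 : 0 < r := Real.rpow_pos_of_pos two_pos _
    have hr1 : r < 1 := Real.rpow_lt_one_of_one_lt_of_neg one_lt_two (by linarith)
    have hterm : ∀ i : ℕ, (2:ℝ) ^ (-(B * ((i : ℝ) + 1))) = r ^ (i+1) := by
      intro i
      rw [hrdef, show -(B * ((i:ℝ)+1)) = (-B) * (((i+1:ℕ)):ℝ) by push_cast; ring,
        Real.rpow_mul (by norm_num), Real.rpow_natCast]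
    have hsum : ∑ i ∈ Finset.range k, (2:ℝ) ^ (-(B * ((i : ℝ) + 1)))
        = r * (1 - r^k) / (1 - r) := by
      have h1 : ∑ i ∈ Finset.range k, (2:ℝ) ^ (-(B * ((i : ℝ) + 1)))
          = ∑ i ∈ Finset.range k, r * r^i := by
        apply Finset.sum_congr rfl
        intro i _
        rw [hterm i, pow_succ, mul_comm]
      have h2 : r - 1 ≠ 0 := by linarith
      have h3 : (1:ℝ) - r ≠ 0 := by linarith
      rw [h1, ← Finset.mul_sum, geom_sum_eq (ne_of_lt hr1)]
      field_simp
      ring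
    unfold gaux
    rw [hsum, ← hPdef, ← mul_div_assoc, div_lt_one (by linarith)]
    -- key inequality : (P-1) * (r * (1 - r^k)) < 1 - r
    set e : ℝ := (2:ℝ) ^ (δ:ℝ) with hedef
    have he : P * r = e := by
      rw [hPdef, hrdef, hedef, ← Real.rpow_natCast 2 d, ← Real.rpow_add two_pos]
      congr 1
      rw [hBdef]; ring
    have he1 : 1 ≤ e := Real.one_le_rpow one_le_two hδ0.le
    have he0 : 0 < e := by linarith
    have hev : e * (1 - 8*w/9) ≤ 1 := by
      have h1 : e = Real.exp (L * δ) := by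
        rw [hedef, Real.rpow_def_of_pos two_pos, hLdef]
      have hLδ : L * δ = 8*w/9 := by rw [hδdef]; field_simp
      have h2 : 1 - 8*w/9 ≤ Real.exp (-(L * δ)) := by
        have h := Real.add_one_le_exp (-(L * δ))
        rw [hLδ] at h ⊢
        linarith
      calc e * (1 - 8*w/9) ≤ Real.exp (L*δ) * Real.exp (-(L*δ)) := by
            apply mul_le_mul (le_of_eq h1) h2 (by linarith) (Real.exp_pos _).le
        _ = 1 := by rw [← Real.exp_add]; simp
    have hrP : P⁻¹ ≤ r := by
      have h1 : P⁻¹ * 1 ≤ P⁻¹ * e := mul_le_mul_of_nonneg_left he1 hPinv0.le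
      rw [← he, ← mul_assoc, inv_mul_cancel₀ hP0.ne', one_mul, mul_one] at h1
      exact h1
    have hrk : w ≤ (P - 1) * r^(k+1) := by
      have h1 : (P⁻¹)^(k+1) ≤ r^(k+1) := pow_le_pow_left₀ (by positivity) hrP _
      have hPk : P^k = Q := by rw [hPdef, hQdef, ← pow_mul]
      have h2 : (P - 1) * (P⁻¹)^(k+1) = w := by
        rw [hwdef, hqdef, ← hPk, pow_succ, inv_pow]
        have hstep : (P - 1) * P⁻¹ = 1 - P⁻¹ := by
          rw [sub_mul, mul_inv_cancel₀ hP0.ne', one_mul]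
        calc (P-1) * ((P^k)⁻¹ * P⁻¹) = ((P-1) * P⁻¹) * (P^k)⁻¹ := by ring
          _ = (1-P⁻¹) * (P^k)⁻¹ := by rw [hstep]
      calc w = (P-1) * (P⁻¹)^(k+1) := h2.symm
        _ ≤ (P-1) * r^(k+1) := mul_le_mul_of_nonneg_left h1 (by linarith)
    have hexp : (P - 1) * (r * (1 - r^k)) = e - r - ((P-1) * r^(k+1)) := by
      linear_combination he
    rw [hexp]
    -- now : e - r - (P-1) r^{k+1} < 1 - r, i.e. e - 1 < (P-1) r^{k+1}
    have hew : e < 9/8 := by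
      have h1 : e * (8/9) < e * (1 - 8*w/9) :=
        mul_lt_mul_of_pos_left (by linarith) he0
      linarith
    have hfin : e - 1 < w := by
      have h1 : e - e * (8*w/9) ≤ 1 := by
        have : e * (1 - 8*w/9) = e - e * (8*w/9) := by ring
        linarith [hev, this.symm.le]
      have h2 : e * (8*w/9) < (9/8) * (8*w/9) :=
        mul_lt_mul_of_pos_right hew (by linarith)
      have h3 : (9/8 : ℝ) * (8*w/9) = w := by ring
      linarith
    linarith [hfin, hrk]
  have hg0 : 0 < gaux d k B := gaux_pos d k hd (by omega) B
  set m : ℝ := - Real.log (gaux d k B) with hmdef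
  have hm0 : 0 < m := by
    have := Real.log_neg hg0 hgB1
    rw [hmdef]; linarith
  set ε₀ : ℝ := min (1/2) (min (m/16) ((m/16)^2)) with hε₀def
  have hε₀0 : 0 < ε₀ := by
    apply lt_min (by norm_num)
    exact lt_min (by positivity) (by positivity)
  have hε₀a : ε₀ ≤ 1/2 := min_le_left _ _
  have hε₀b : ε₀ ≤ m/16 := (min_le_right _ _).trans (min_le_left _ _)
  have hε₀c : ε₀ ≤ (m/16)^2 := (min_le_right _ _).trans (min_le_right _ _)
  clear_value L sd k P Q q w δ B m ε₀
  have hK0 : 0 ≤ Real.log ((2:ℝ)^k) := Real.log_nonneg (one_le_pow₀ one_le_two)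
  -- key estimate at B
  have hGB : ∀ ε ∈ Set.Icc (0:ℝ) ε₀,
      (1 - ε) * Real.log (gaux d k B / (1 - ε)) + ε * Real.log (1/ε)
        < B * ε * Real.log ((2:ℝ)^k) := by
    rintro ε ⟨hε0, hεε⟩
    have hεh : ε ≤ 1/2 := le_trans hεε hε₀a
    have hεm : ε ≤ m/16 := le_trans hεε hε₀b
    have hεm2 : ε ≤ (m/16)^2 := le_trans hεε hε₀c
    rcases eq_or_lt_of_le hε0 with h0 | hε
    · rw [← h0]
      simp only [sub_zero, one_mul, div_one, zero_mul, mul_zero, add_zero]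
      rw [show Real.log (gaux d k B) = -m by rw [hmdef]; ring]
      linarith
    · have h1ε : 0 < 1 - ε := by linarith
      have hsplit : Real.log (gaux d k B / (1-ε))
          = Real.log (gaux d k B) - Real.log (1-ε) := Real.log_div hg0.ne' h1ε.ne'
      have hT1 : (1-ε) * Real.log (gaux d k B) ≤ -(m/2) := by
        rw [show Real.log (gaux d k B) = -m by rw [hmdef]; ring]
        have hεm' : ε * m ≤ (1/2) * m := mul_le_mul_of_nonneg_right hεh hm0.le
        have hexpand : (1-ε) * (-m) = -m + ε * m := by ring
        rw [hexpand]
        linarith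
      have hT2 : (1-ε) * (- Real.log (1-ε)) ≤ ε := by
        have h := Real.log_le_sub_one_of_pos (show (0:ℝ) < (1-ε)⁻¹ by positivity)
        rw [Real.log_inv] at h
        have h2 : (1-ε)⁻¹ - 1 = ε/(1-ε) := by field_simp; ring
        rw [h2] at h
        calc (1-ε) * (- Real.log (1-ε)) ≤ (1-ε) * (ε/(1-ε)) := by
              apply mul_le_mul_of_nonneg_left h (by linarith)
          _ = ε := by field_simp
      have hT3 : ε * Real.log (1/ε) ≤ m/8 := by
        set u : ℝ := Real.sqrt ε with hudef
        have hu0 : 0 < u := Real.sqrt_pos.mpr hε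
        have huu : u * u = ε := Real.mul_self_sqrt hε0
        have hum : u ≤ m/16 := by
          rw [hudef, show m/16 = Real.sqrt ((m/16)^2) by
            rw [Real.sqrt_sq (by positivity)]]
          exact Real.sqrt_le_sqrt hεm2
        have hlog : Real.log (1/ε) = 2 * Real.log (1/u) := by
          rw [one_div, one_div, Real.log_inv, Real.log_inv, ← huu,
            Real.log_mul hu0.ne' hu0.ne']
          ring
        have h2 : Real.log (1/u) ≤ 1/u := by
          have := Real.log_le_sub_one_of_pos (show (0:ℝ) < 1/u by positivity)
          linarith
        calc ε * Real.log (1/ε) = ε * (2 * Real.log (1/u)) := by rw [hlog]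
          _ ≤ ε * (2 * (1/u)) := by
              apply mul_le_mul_of_nonneg_left _ hε0
              linarith
          _ = 2 * u := by rw [← huu]; field_simp
          _ ≤ m/8 := by linarith
      have hRHS : 0 ≤ B * ε * Real.log ((2:ℝ)^k) := by
        apply mul_nonneg (mul_nonneg (by linarith) hε0) hK0
      rw [hsplit]
      have hexpand : (1-ε) * (Real.log (gaux d k B) - Real.log (1-ε))
          = (1-ε) * Real.log (gaux d k B) + (1-ε) * (- Real.log (1-ε)) := by ring
      rw [hexpand]
      linarith only [hT1, hT2, hT3, hRHS, hm0, hεm]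
  -- every solution is ≤ B
  have hsub : ∀ ε ∈ Set.Icc (0:ℝ) ε₀, ∀ s : ℝ,
      (1 - ε) * Real.log (gaux d k s / (1 - ε)) + ε * Real.log (1/ε)
        = s * ε * Real.log ((2:ℝ)^k) → s ≤ B := by
    rintro ε hε s hs
    by_contra hsB
    push_neg at hsB
    obtain ⟨hε0, hεε⟩ := hε
    have hεh : ε ≤ 1/2 := le_trans hεε hε₀a
    have h1ε : 0 < 1 - ε := by linarith
    have hgs : gaux d k s ≤ gaux d k B := gaux_anti d k hd hsB.le
    have hgs0 : 0 < gaux d k s := gaux_pos d k hd (by omega) s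
    have h2 : Real.log (gaux d k s / (1-ε)) ≤ Real.log (gaux d k B / (1-ε)) := by
      apply (Real.log_le_log_iff (by positivity) (by positivity)).mpr
      gcongr
    have h3 := hGB ε ⟨hε0, hεε⟩
    have h5 : B * ε * Real.log ((2:ℝ)^k) ≤ s * ε * Real.log ((2:ℝ)^k) := by
      have h6 : 0 ≤ (s - B) * (ε * Real.log ((2:ℝ)^k)) :=
        mul_nonneg (by linarith) (mul_nonneg hε0 hK0)
      have h7 : s * ε * Real.log ((2:ℝ)^k) - B * ε * Real.log ((2:ℝ)^k)
          = (s - B) * (ε * Real.log ((2:ℝ)^k)) := by ring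
      linarith
    have h8 := mul_le_mul_of_nonneg_left h2 h1ε.le
    linarith [hs.ge, hs.le, h3, h5, h8]
  -- sup bound
  have hsdk : ∀ ε ∈ Set.Icc (0:ℝ) ε₀, sdk d k ε ≤ B := by
    intro ε hε
    rw [sdk_eq]
    set S := {s : ℝ |
      (1 - ε) * Real.log (gaux d k s / (1 - ε))
        + ε * Real.log (1 / ε) = s * ε * Real.log ((2 : ℝ) ^ k)} with hSdef
    rcases S.eq_empty_or_nonempty with hS | hS
    · rw [hS, Real.sSup_empty]; linarith
    · exact csSup_le hS (fun s hs => hsub ε hε s hs)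
  -- final numeric inequality
  have hdd : (d:ℝ) ^ ((d:ℝ)/2) = sd^d := by
    rw [show (d:ℝ)/2 = (1/2) * (d:ℝ) by ring, Real.rpow_mul (by positivity),
      Real.rpow_natCast, hsddef, Real.sqrt_eq_rpow]
  have h16 : ((2:ℝ))^(4*d) = P * 8^d := by
    rw [pow_mul, hPdef, ← mul_pow]; norm_num
  have hQα : Q * α^d < 8^d * sd^d := by
    have h1 : ((2:ℝ)^k)^d < (8*sd/α)^d :=
      pow_lt_pow_left₀ h2k (by positivity) (by omega)
    have h2 : Q = ((2:ℝ)^k)^d := by rw [hQdef, ← pow_mul, mul_comm]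
    have h3 : ((8*sd/α)^d) * α^d = 8^d * sd^d := by
      rw [div_pow, mul_pow, div_mul_cancel₀]
      positivity
    calc Q * α^d < ((8*sd/α)^d) * α^d := by
          rw [h2]; exact mul_lt_mul_of_pos_right h1 (by positivity)
      _ = 8^d * sd^d := h3
  have hckey : 2 / (5 * L * 2 ^ (4 * d) * (d : ℝ) ^ ((d : ℝ) / 2)) * α ^ d
      < P⁻¹ * δ := by
    rw [hdd, h16]
    have hrhs : P⁻¹ * δ = 8 * (1-P⁻¹) / (9*L*P*Q) := by
      rw [hδdef, hwdef, hqdef]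
      rw [div_eq_mul_inv, div_eq_mul_inv, mul_inv, mul_inv, mul_inv]
      ring
    rw [hrhs, div_mul_eq_mul_div, div_lt_div_iff₀ (by positivity) (by positivity)]
    have hhalf : (1:ℝ)/2 ≤ 1 - P⁻¹ := by linarith
    have hA : 0 < 18 * L * P := by positivity
    have hX : 0 < L * P * (8^d * sd^d) := by positivity
    have hA' := mul_lt_mul_of_pos_left hQα hA
    have hB' := mul_le_mul_of_nonneg_right hhalf hX.le
    linarith only [hA', hB', hX]
  -- conclude
  refine ⟨ε₀, hε₀0, ?_, ?_⟩
  · intro ε hε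
    have h1 := hsdk ε hε
    have h2 : δ ≤ tdk d k ε := by
      unfold tdk
      rw [hBdef] at h1
      linarith
    calc 2 / (5 * L * 2 ^ (4 * d) * (d : ℝ) ^ ((d : ℝ) / 2)) * α ^ d
        < P⁻¹ * δ := hckey
      _ ≤ P⁻¹ * tdk d k ε := by
          apply mul_le_mul_of_nonneg_left h2 hPinv0.le
  · have h1 := hsdk 0 ⟨le_refl _, hε₀0.le⟩
    have h2 : δ ≤ tdk d k 0 := by
      unfold tdk
      rw [hBdef] at h1
      linarith
    calc 2 / (5 * L * 2 ^ (4 * d) * (d : ℝ) ^ ((d : ℝ) / 2)) * α ^ d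
        < P⁻¹ * δ := hckey
      _ ≤ P⁻¹ * tdk d k 0 := by
          apply mul_le_mul_of_nonneg_left h2 hPinv0.le
end

section
/- Let d, k ≥ 1 be integers. Then there exists ε₀ > 0 (depending on d and k) such that for all ε ∈ [0, ε₀], t_{d,k}(ε) > (2/(5·log 2))·2^{-kd}. In particular t_{d,k}(0) = d − s₀ > (2/(5·log 2))·2^{-kd}, where s₀ is the largest real solution of (2^d−1)·Σ_{i=1}^k 2^{-s·i} = 1. -/
open MeasureTheory Filter Metric Set
open scoped ENNReal NNReal

namespace TdkAux

noncomputable def A (d k : ℕ) (s : ℝ) : ℝ :=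
  ((2 : ℝ) ^ d - 1) * ∑ i ∈ Finset.range k, (2 : ℝ) ^ (-(s * ((i : ℝ) + 1)))

lemma exp_aux (z : ℝ) (h0 : 0 ≤ z) (h1 : z ≤ 1/5) : Real.exp z ≤ 1 + (5/4)*z := by
  have h2 : 1 - z ≤ Real.exp (-z) := by have := Real.add_one_le_exp (-z); linarith
  have h3 : Real.exp z * Real.exp (-z) = 1 := by rw [← Real.exp_add]; simp
  have h5 : Real.exp z * (1 - z) ≤ 1 := by nlinarith [Real.exp_pos z]
  nlinarith [Real.exp_pos z]

lemma geom1 (x : ℝ) (k : ℕ) : (1-x) * ∑ i ∈ Finset.range k, x^(i+1) = x - x^(k+1) := by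
  induction k with
  | zero => simp
  | succ n ih => rw [Finset.sum_range_succ]; ring_nf; ring_nf at ih; linear_combination ih

lemma geom2 (x : ℝ) (k : ℕ) : (1-x)^2 * ∑ i ∈ Finset.range k, ((i:ℝ)+1)*x^(i+1)
    = x*(1 - ((k:ℝ)+1)*x^k + (k:ℝ)*x^(k+1)) := by
  induction k with
  | zero => simp
  | succ n ih => rw [Finset.sum_range_succ]; push_cast; push_cast at ih; linear_combination ih

lemma nat_aux (k : ℕ) (hk : 1 ≤ k) : 2*k ≤ 2^k := by
  induction k with
  | zero => omega
  | succ n ih =>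
    rcases Nat.lt_or_ge n 1 with h | h
    · interval_cases n
      norm_num
    · have h2 : 2 ≤ 2^n := by
        calc 2 = 2^1 := rfl
          _ ≤ 2^n := Nat.pow_le_pow_right (by norm_num) h
      have := ih h
      rw [pow_succ]; omega

lemma term_eq (d i : ℕ) (δ : ℝ) :
    (2:ℝ) ^ (-(((d:ℝ) - δ) * ((i:ℝ)+1)))
      = (((2:ℝ)^d)⁻¹)^(i+1) * Real.exp (Real.log 2 * (δ * ((i:ℝ)+1))) := by
  rw [show (-(((d:ℝ) - δ) * ((i:ℝ)+1))) = (-(d:ℝ)) * ((i:ℝ)+1) + δ*((i:ℝ)+1) by ring]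
  rw [Real.rpow_add (by norm_num), Real.rpow_def_of_pos (by norm_num : (0:ℝ)<2) (δ*((i:ℝ)+1))]
  congr 1
  rw [Real.rpow_mul (by norm_num : (0:ℝ) ≤ 2)]
  rw [show ((i:ℝ)+1) = ((i+1 : ℕ):ℝ) by push_cast; ring, Real.rpow_natCast]
  congr 1
  rw [Real.rpow_neg (by norm_num), Real.rpow_natCast]

lemma two_pow_sub_one_pos {d : ℕ} (hd : 1 ≤ d) : (0:ℝ) < (2:ℝ)^d - 1 := by
  have : (2:ℝ)^1 ≤ (2:ℝ)^d := pow_le_pow_right₀ one_le_two hd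
  norm_num at this; linarith

lemma A_pos (d k : ℕ) (hd : 1 ≤ d) (hk : 1 ≤ k) (s : ℝ) : 0 < A d k s := by
  apply mul_pos (two_pow_sub_one_pos hd)
  apply Finset.sum_pos (fun i _ => Real.rpow_pos_of_pos (by norm_num) _)
  simp only [Finset.nonempty_range_iff]
  omega

lemma A_anti (d k : ℕ) (hd : 1 ≤ d) (hk : 1 ≤ k) : StrictAnti (A d k) := by
  intro s t hst
  unfold A
  apply mul_lt_mul_of_pos_left _ (two_pow_sub_one_pos hd)
  apply Finset.sum_lt_sum_of_nonempty (by simp only [Finset.nonempty_range_iff]; omega)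
  intro i _
  rw [Real.rpow_lt_rpow_left_iff (by norm_num : (1:ℝ) < 2)]
  have : (0:ℝ) < (i:ℝ)+1 := by positivity
  nlinarith

lemma A_cont (d k : ℕ) : Continuous (A d k) := by
  have : A d k = fun s => ((2 : ℝ) ^ d - 1) *
      ∑ i ∈ Finset.range k, Real.exp (Real.log 2 * (-(s * ((i : ℝ) + 1)))) := by
    funext s
    unfold A
    congr 1
    apply Finset.sum_congr rfl
    intro i _
    rw [Real.rpow_def_of_pos (by norm_num : (0:ℝ)<2)]
  rw [this]
  apply Continuous.mul continuous_const
  apply continuous_finset_sum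
  intro i _
  fun_prop

set_option maxHeartbeats 2000000 in
lemma A_lt_one (d k : ℕ) (hd : 1 ≤ d) (hk : 1 ≤ k) :
    A d k ((d:ℝ) - 2/(5*Real.log 2) * ((2:ℝ)^(k*d))⁻¹) < 1 := by
  set x : ℝ := ((2:ℝ)^d)⁻¹ with hxdef
  set y : ℝ := ((2:ℝ)^(k*d))⁻¹ with hydef
  set δ : ℝ := 2/(5*Real.log 2) * y with hδdef
  have hpow : (0:ℝ) < (2:ℝ)^d := by positivity
  have hx0 : 0 < x := by rw [hxdef]; positivity
  have h2d : (2:ℝ)^1 ≤ (2:ℝ)^d := pow_le_pow_right₀ one_le_two hd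
  have hx2 : x ≤ 1/2 := by
    rw [hxdef, inv_le_comm₀ hpow (by norm_num)]
    norm_num at h2d ⊢; linarith
  have hxy : y = x^k := by
    rw [hydef, hxdef, inv_pow, ← pow_mul, Nat.mul_comm k d]
  have hy0 : 0 < y := by rw [hydef]; positivity
  have hky : (k:ℝ) * y ≤ 1/2 := by
    have hnat : 2*k ≤ 2^(k*d) := by
      calc 2*k ≤ 2^k := nat_aux k hk
        _ ≤ 2^(k*d) := Nat.pow_le_pow_right (by norm_num) (Nat.le_mul_of_pos_right k hd)
    have h2 : ((2*k : ℕ):ℝ) ≤ ((2^(k*d) : ℕ):ℝ) := Nat.cast_le.mpr hnat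
    push_cast at h2
    rw [hydef, mul_inv_le_iff₀ (by positivity)]
    linarith
  have hP : ((2:ℝ)^d - 1) * x = 1 - x := by
    rw [hxdef]; field_simp
  have hlog2 : Real.log 2 > 0 := Real.log_pos (by norm_num)
  have hδlog : Real.log 2 * δ = 2/5 * y := by
    rw [hδdef]; field_simp
  have hδ0 : 0 < δ := by rw [hδdef]; positivity
  clear_value x y δ
  have hfac : (0:ℝ) < (2:ℝ)^d - 1 := by norm_num at h2d ⊢; linarith
  have hterm : ∀ i ∈ Finset.range k, (2:ℝ) ^ (-(((d:ℝ) - δ) * ((i:ℝ)+1))) ≤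
      x^(i+1) + (y/2) * (((i:ℝ)+1)*x^(i+1)) := by
    intro i hi
    have hik : ((i:ℝ)+1) ≤ (k:ℝ) := by
      have := Finset.mem_range.mp hi
      exact_mod_cast Nat.succ_le_of_lt this
    have heq := term_eq d i δ
    rw [← hxdef] at heq
    rw [heq]
    have hz : Real.log 2 * (δ * ((i:ℝ)+1)) = 2/5*y*((i:ℝ)+1) := by
      rw [← mul_assoc, hδlog]
    have hi1 : (0:ℝ) ≤ (i:ℝ)+1 := by positivity
    have hz0 : 0 ≤ 2/5*y*((i:ℝ)+1) := by positivity
    have hz1 : 2/5*y*((i:ℝ)+1) ≤ 1/5 := by nlinarith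
    have hexp := exp_aux _ hz0 hz1
    rw [hz]
    calc x^(i+1) * Real.exp (2/5*y*((i:ℝ)+1)) ≤ x^(i+1) * (1 + (5/4)*(2/5*y*((i:ℝ)+1))) := by
          apply mul_le_mul_of_nonneg_left hexp (by positivity)
      _ = x^(i+1) + (y/2) * (((i:ℝ)+1)*x^(i+1)) := by ring
  set S1 : ℝ := ∑ i ∈ Finset.range k, x^(i+1) with hS1def
  set S2 : ℝ := ∑ i ∈ Finset.range k, ((i:ℝ)+1)*x^(i+1) with hS2def
  have hsumle : A d k ((d:ℝ) - δ) ≤ ((2:ℝ)^d - 1) * (S1 + (y/2) * S2) := by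
    unfold A
    apply mul_le_mul_of_nonneg_left _ hfac.le
    rw [hS1def, hS2def, Finset.mul_sum, ← Finset.sum_add_distrib]
    exact Finset.sum_le_sum hterm
  have hg1 := geom1 x k
  have hg2 := geom2 x k
  rw [← hS1def] at hg1
  rw [← hS2def] at hg2
  clear_value S1 S2
  have hS1 : ((2:ℝ)^d - 1) * S1 = 1 - y := by
    have h : (((2:ℝ)^d - 1) * S1) * x = (1 - y) * x := by
      linear_combination S1*hP + hg1 + x*hxy
    exact mul_right_cancel₀ hx0.ne' h
  have h1x : 0 < 1 - x := by linarith
  have hkey : (((2:ℝ)^d - 1) * S2) * (x*(1-x)) = x*(1 - ((k:ℝ)+1)*x^k + (k:ℝ)*x^(k+1)) := by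
    linear_combination S2*(1-x)*hP + hg2
  have hk1 : (1:ℝ) ≤ (k:ℝ) := by exact_mod_cast hk
  have hxk : 0 < x^k := pow_pos hx0 k
  have h' : 1 - ((k:ℝ)+1)*x^k + (k:ℝ)*x^(k+1) < 2*(1-x) := by
    have hxk1 : x^(k+1) = x^k * x := pow_succ x k
    nlinarith [mul_nonneg (mul_nonneg (by positivity : (0:ℝ) ≤ (k:ℝ)) hxk.le)
      (by linarith : (0:ℝ) ≤ 1/2 - x)]
  have hrhs : x*(1 - ((k:ℝ)+1)*x^k + (k:ℝ)*x^(k+1)) < 2 * (x*(1-x)) := by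
    nlinarith [mul_lt_mul_of_pos_left h' hx0]
  have hS2 : ((2:ℝ)^d - 1) * S2 < 2 := by
    have h2 : (((2:ℝ)^d - 1) * S2) * (x*(1-x)) < 2 * (x*(1-x)) := by rw [hkey]; exact hrhs
    exact lt_of_mul_lt_mul_right h2 (by positivity)
  calc A d k ((d:ℝ) - δ) ≤ ((2:ℝ)^d - 1) * (S1 + (y/2) * S2) := hsumle
    _ = (1 - y) + (y/2) * (((2:ℝ)^d - 1) * S2) := by linear_combination hS1
    _ < (1 - y) + (y/2) * 2 := by nlinarith
    _ = 1 := by ring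

end TdkAux

open TdkAux Topology in
set_option maxHeartbeats 2000000 in
/-- For integers `d, k ≥ 1` there is `ε₀ > 0` such that
`t_{d,k}(ε) > (2/(5·log 2))·2^{-kd}` for all `ε ∈ [0, ε₀]`. In particular
`t_{d,k}(0) = d − s₀ > (2/(5·log 2))·2^{-kd}`, where `s₀` is the largest real solution of
`(2^d−1)·Σ_{i=1}^k 2^{-s·i} = 1`. -/
theorem tdk_lower_bound_near_zero (d k : ℕ) (hd : 1 ≤ d) (hk : 1 ≤ k) :
    (∃ ε₀ > (0 : ℝ), ∀ ε ∈ Set.Icc (0 : ℝ) ε₀,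
        2 / (5 * Real.log 2) * ((2 : ℝ) ^ (k * d))⁻¹ < tdk d k ε) ∧
      tdk d k 0 = (d : ℝ) -
        sSup {s : ℝ |
          ((2 : ℝ) ^ d - 1) * (∑ i ∈ Finset.range k, (2 : ℝ) ^ (-(s * ((i : ℝ) + 1)))) = 1} ∧
      2 / (5 * Real.log 2) * ((2 : ℝ) ^ (k * d))⁻¹ < tdk d k 0 := by
  have hlog2 : (0:ℝ) < Real.log 2 := Real.log_pos (by norm_num)
  set δ : ℝ := 2/(5*Real.log 2) * ((2:ℝ)^(k*d))⁻¹ with hδdef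
  have hδ0 : 0 < δ := by
    rw [hδdef]
    exact mul_pos (div_pos (by norm_num) (by linarith)) (inv_pos.mpr (by positivity))
  have hAdlt : A d k ((d:ℝ) - δ) < 1 := A_lt_one d k hd hk
  set S0 : Set ℝ := {s : ℝ | A d k s = 1} with hS0def
  have hanti := A_anti d k hd hk
  have hcont := A_cont d k
  have h2d : (2:ℝ)^1 ≤ (2:ℝ)^d := pow_le_pow_right₀ one_le_two hd
  have hne : S0.Nonempty := by
    have hAd : A d k (d:ℝ) < 1 := by
      calc A d k (d:ℝ) ≤ A d k ((d:ℝ) - δ) := hanti.antitone (by linarith)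
        _ < 1 := hAdlt
    have hAm1 : (2:ℝ) ≤ A d k (-1) := by
      have h1 : (1:ℝ) ≤ (2:ℝ)^d - 1 := by norm_num at h2d ⊢; linarith
      have hSig : (2:ℝ) ≤ ∑ i ∈ Finset.range k, (2:ℝ)^(-((-1:ℝ) * ((i:ℝ)+1))) := by
        have h0 : (2:ℝ)^(-((-1:ℝ) * (((0:ℕ):ℝ)+1))) = 2 := by
          norm_num
        calc (2:ℝ) = (2:ℝ)^(-((-1:ℝ) * (((0:ℕ):ℝ)+1))) := h0.symm
          _ ≤ ∑ i ∈ Finset.range k, (2:ℝ)^(-((-1:ℝ) * ((i:ℝ)+1))) := by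
              apply Finset.single_le_sum (f := fun i : ℕ => (2:ℝ)^(-((-1:ℝ) * ((i:ℝ)+1))))
                (fun i _ => (Real.rpow_pos_of_pos (by norm_num) _).le)
              simp only [Finset.mem_range]; omega
      calc (2:ℝ) = 1 * 2 := by ring
        _ ≤ ((2:ℝ)^d - 1) * ∑ i ∈ Finset.range k, (2:ℝ)^(-((-1:ℝ) * ((i:ℝ)+1))) :=
            mul_le_mul h1 hSig (by norm_num) (by linarith)
        _ = A d k (-1) := rfl
    have hIcc : (1:ℝ) ∈ Set.Icc (A d k (d:ℝ)) (A d k (-1)) := ⟨hAd.le, by linarith⟩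
    have hd1 : (-1:ℝ) ≤ (d:ℝ) := by
      have : (0:ℝ) ≤ (d:ℝ) := Nat.cast_nonneg d
      linarith
    obtain ⟨s, _, hs⟩ := intermediate_value_Icc' hd1 hcont.continuousOn hIcc
    exact ⟨s, hs⟩
  have hub : ∀ s ∈ S0, s < (d:ℝ) - δ := by
    intro s hs
    by_contra hcon
    push_neg at hcon
    have h1 : A d k s ≤ A d k ((d:ℝ) - δ) := hanti.antitone hcon
    have h2 : A d k s = 1 := hs
    linarith
  have hbdd : BddAbove S0 := ⟨(d:ℝ) - δ, fun s hs => (hub s hs).le⟩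
  have hclosed : IsClosed S0 := isClosed_eq hcont continuous_const
  have hmem : sSup S0 ∈ S0 := hclosed.csSup_mem hne hbdd
  have hs0lt : sSup S0 < (d:ℝ) - δ := hub _ hmem
  have hmem1 : A d k (sSup S0) = 1 := hmem
  have hs0nonneg : 0 ≤ sSup S0 := by
    by_contra h
    push_neg at h
    have hA0 : (1:ℝ) ≤ A d k 0 := by
      have hA0eq : A d k 0 = ((2:ℝ)^d - 1) * k := by
        unfold A
        congr 1
        rw [Finset.sum_congr rfl (g := fun i : ℕ => (1:ℝ)) (fun i _ => by norm_num)]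
        simp
      rw [hA0eq]
      have h1 : (1:ℝ) ≤ (2:ℝ)^d - 1 := by norm_num at h2d ⊢; linarith
      have h2 : (1:ℝ) ≤ (k:ℝ) := by exact_mod_cast hk
      nlinarith
    have := hanti h
    rw [hmem1] at this
    linarith
  have hsdk0 : sdk d k 0 = sSup S0 := by
    unfold sdk
    congr 1
    ext s
    simp only [Set.mem_setOf_eq, sub_zero, one_mul, div_one, zero_mul, mul_zero, add_zero,
      hS0def]
    have hexpr : ((2:ℝ)^d - 1) * (∑ i ∈ Finset.range k, (2:ℝ)^(-(s * ((i:ℝ)+1)))) = A d k s := rfl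
    rw [hexpr]
    constructor
    · intro h
      rcases Real.log_eq_zero.mp h with h0 | h1 | hm
      · exact absurd h0 (A_pos d k hd hk s).ne'
      · exact h1
      · nlinarith [A_pos d k hd hk s]
    · intro h; rw [h, Real.log_one]
  have htdk0 : δ < tdk d k 0 := by
    unfold tdk
    rw [hsdk0]
    linarith
  have hconj2 : tdk d k 0 = (d : ℝ) -
      sSup {s : ℝ |
        ((2 : ℝ) ^ d - 1) * (∑ i ∈ Finset.range k, (2 : ℝ) ^ (-(s * ((i : ℝ) + 1)))) = 1} := by
    unfold tdk
    rw [hsdk0]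
    rfl
  refine ⟨?_, hconj2, htdk0⟩
  -- the ε₀ part
  set s' : ℝ := (sSup S0 + ((d:ℝ) - δ))/2 with hs'def
  have hs'1 : sSup S0 < s' := by rw [hs'def]; linarith
  have hs'2 : s' < (d:ℝ) - δ := by rw [hs'def]; linarith
  have hs'0 : 0 < s' := by linarith
  have hAs' : A d k s' < 1 := by
    have := hanti hs'1
    linarith
  set η : ℝ := 1 - A d k s' with hηdef
  have hη0 : 0 < η := by rw [hηdef]; linarith
  have hη1 : η < 1 := by
    have := A_pos d k hd hk s'
    rw [hηdef]; linarith
  have hAs'eq : A d k s' = 1 - η := by rw [hηdef]; ring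
  set K : ℝ := Real.log ((2:ℝ)^k) with hKdef
  have hK0 : 0 < K := by
    rw [hKdef]
    apply Real.log_pos
    have : (2:ℝ)^1 ≤ (2:ℝ)^k := pow_le_pow_right₀ one_le_two hk
    norm_num at this ⊢; linarith
  have Tε : Tendsto (fun ε : ℝ => ε) (𝓝[>] (0:ℝ)) (𝓝 0) :=
    tendsto_id.mono_left nhdsWithin_le_nhds
  have T1ε : Tendsto (fun ε : ℝ => 1 - ε) (𝓝[>] (0:ℝ)) (𝓝 1) := by
    have := ((tendsto_const_nhds : Tendsto (fun _ : ℝ => (1:ℝ)) (𝓝[>] (0:ℝ)) (𝓝 1)).sub Tε)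
    simpa using this
  have Tlog : Tendsto (fun ε : ℝ => Real.log (1 - ε)) (𝓝[>] (0:ℝ)) (𝓝 0) := by
    have hc : ContinuousAt Real.log 1 := Real.continuousAt_log (by norm_num)
    have := hc.tendsto.comp T1ε
    simpa [Function.comp_def] using this
  have T2 : Tendsto (fun ε : ℝ => ε * Real.log (1/ε)) (𝓝[>] (0:ℝ)) (𝓝 0) := by
    have h := tendsto_log_mul_rpow_nhdsGT_zero (by norm_num : (0:ℝ) < 1)
    have h2 : Tendsto (fun x : ℝ => -(Real.log x * x ^ (1:ℝ))) (𝓝[>] (0:ℝ)) (𝓝 0) := by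
      simpa using h.neg
    apply h2.congr
    intro x
    rw [Real.rpow_one, one_div, Real.log_inv]; ring
  have htend : Tendsto (fun ε : ℝ => (1-ε)*(Real.log (1-η) - Real.log (1-ε))
      + ε * Real.log (1/ε) - s' * (ε * K)) (𝓝[>] (0:ℝ)) (𝓝 (Real.log (1-η))) := by
    have T1 : Tendsto (fun ε : ℝ => (1-ε)*(Real.log (1-η) - Real.log (1-ε)))
        (𝓝[>] (0:ℝ)) (𝓝 (Real.log (1-η))) := by
      have := T1ε.mul ((tendsto_const_nhds :
        Tendsto (fun _ : ℝ => Real.log (1-η)) (𝓝[>] (0:ℝ)) (𝓝 (Real.log (1-η)))).sub Tlog)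
      simpa using this
    have T3 : Tendsto (fun ε : ℝ => s' * (ε * K)) (𝓝[>] (0:ℝ)) (𝓝 0) := by
      have := (Tε.mul_const K).const_mul s'
      simpa using this
    have := (T1.add T2).sub T3
    simpa using this
  have hlogneg : Real.log (1-η) < 0 := Real.log_neg (by linarith) (by linarith)
  have hev : ∀ᶠ ε in 𝓝[>] (0:ℝ),
      ((1-ε)*(Real.log (1-η) - Real.log (1-ε)) + ε * Real.log (1/ε) - s' * (ε * K) < 0
        ∧ ε < 1/2) :=
    (htend.eventually_lt_const hlogneg).and (Tε.eventually_lt_const (by norm_num))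
  obtain ⟨u, hu, hsub⟩ := mem_nhdsGT_iff_exists_Ioc_subset.mp hev
  refine ⟨u, hu, ?_⟩
  intro ε hε
  rcases eq_or_lt_of_le hε.1 with h0 | h0
  · rw [← h0]; exact htdk0
  · obtain ⟨hg, hhalf⟩ := hsub ⟨h0, hε.2⟩
    have h1ε : 0 < 1 - ε := by linarith
    have hbound : ∀ s ∈ {s : ℝ |
        (1 - ε) * Real.log (((2 : ℝ) ^ d - 1) *
            (∑ i ∈ Finset.range k, (2 : ℝ) ^ (-(s * ((i : ℝ) + 1)))) / (1 - ε))
          + ε * Real.log (1 / ε) = s * ε * Real.log ((2 : ℝ) ^ k)}, s ≤ s' := by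
      intro s hs
      simp only [Set.mem_setOf_eq] at hs
      by_contra hcon
      push_neg at hcon
      have hAe : ((2:ℝ)^d - 1) *
          (∑ i ∈ Finset.range k, (2:ℝ)^(-(s * ((i:ℝ)+1)))) = A d k s := rfl
      rw [hAe] at hs
      have hAlt : A d k s < 1 - η := by rw [← hAs'eq]; exact hanti hcon
      have hApos := A_pos d k hd hk s
      have hlogle : Real.log (A d k s / (1-ε)) ≤ Real.log ((1-η)/(1-ε)) := by
        apply Real.log_le_log (by positivity)
        gcongr
      have hlogdiv : Real.log ((1-η)/(1-ε)) = Real.log (1-η) - Real.log (1-ε) :=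
        Real.log_div (by linarith) (by linarith)
      have hmul : (1-ε) * Real.log (A d k s / (1-ε)) ≤
          (1-ε) * (Real.log (1-η) - Real.log (1-ε)) := by
        rw [← hlogdiv]; exact mul_le_mul_of_nonneg_left hlogle h1ε.le
      have hP0 : 0 < ε * K := mul_pos h0 hK0
      have hsP : s' * (ε * K) < s * (ε * K) := mul_lt_mul_of_pos_right hcon hP0
      have hrw : s * ε * Real.log ((2:ℝ)^k) = s * (ε * K) := by rw [hKdef]; ring
      rw [hrw] at hs
      linarith
    have hsdkle : sdk d k ε ≤ s' := Real.sSup_le hbound hs'0.le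
    unfold tdk
    linarith
end

section
/- Let δ > 0, let R* be a δ-regular tree of cubes with root [0,1)^d, and let μ be a Borel probability measure on [0,1)^d. Then dim_P(μ) equals the μ-essential supremum over x of limsup_{n→∞} log(1/μ(R_n(x))) / log(1/ℓ(R_n(x))). -/
open MeasureTheory Filter Metric Set
open scoped ENNReal NNReal

/-- The unit cube `[0,1)^d`. -/
def unitCube (d : ℕ) : Set (EuclideanSpace ℝ (Fin d)) :=
  {x | ∀ j : Fin d, 0 ≤ x j ∧ x j < 1}

/-- The half-open axis-parallel cube with corner `a` and side `l`. -/
def cubeSet {d : ℕ} (a : EuclideanSpace ℝ (Fin d)) (l : ℝ) : Set (EuclideanSpace ℝ (Fin d)) :=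
  {y | ∀ j : Fin d, a j ≤ y j ∧ y j < a j + l}

/-- A `δ`-regular tree of half-open cubes with root `[0,1)^d`, encoded by the functions
`x ↦ R_n(x)` (given by a corner and a side length). At each level the cubes containing
points of the unit cube form a partition of their parent into finitely many cubes,
and all side ratios lie in `[δ, 1−δ]`. -/
structure CubeTree (d : ℕ) (δ : ℝ) where
  corner : ℕ → EuclideanSpace ℝ (Fin d) → EuclideanSpace ℝ (Fin d)
  side : ℕ → EuclideanSpace ℝ (Fin d) → ℝ
  corner_zero : ∀ x ∈ unitCube d, corner 0 x = 0
  side_zero : ∀ x ∈ unitCube d, side 0 x = 1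
  mem_node : ∀ n, ∀ x ∈ unitCube d, x ∈ cubeSet (corner n x) (side n x)
  side_pos : ∀ n, ∀ x ∈ unitCube d, 0 < side n x
  compat : ∀ n, ∀ x ∈ unitCube d, ∀ y ∈ unitCube d,
    y ∈ cubeSet (corner n x) (side n x) → corner n y = corner n x ∧ side n y = side n x
  nested : ∀ n, ∀ x ∈ unitCube d,
    cubeSet (corner (n + 1) x) (side (n + 1) x) ⊆ cubeSet (corner n x) (side n x)
  regular : ∀ n, ∀ x ∈ unitCube d,
    δ ≤ side (n + 1) x / side n x ∧ side (n + 1) x / side n x ≤ 1 - δ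
  finiteChildren : ∀ n, ∀ x ∈ unitCube d,
    Set.Finite {c : EuclideanSpace ℝ (Fin d) × ℝ |
      ∃ y ∈ unitCube d, y ∈ cubeSet (corner n x) (side n x) ∧
        c = (corner (n + 1) y, side (n + 1) y)}

/-- The cube `R_n(x)` of the tree, as a set. -/
def CubeTree.node {d : ℕ} {δ : ℝ} (T : CubeTree d δ) (n : ℕ)
    (x : EuclideanSpace ℝ (Fin d)) : Set (EuclideanSpace ℝ (Fin d)) :=
  cubeSet (T.corner n x) (T.side n x)

/-- The offspring of the cube `R_n(x)`, as (corner, side) pairs. -/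
def CubeTree.children {d : ℕ} {δ : ℝ} (T : CubeTree d δ) (n : ℕ)
    (x : EuclideanSpace ℝ (Fin d)) : Set (EuclideanSpace ℝ (Fin d) × ℝ) :=
  {c | ∃ y ∈ unitCube d, y ∈ T.node n x ∧ c = (T.corner (n + 1) y, T.side (n + 1) y)}

/-- The entropy `H(R_n(x)) = Σ_{R ∈ R(Q)} μ^Q(R)·log(1/μ^Q(R))` where `μ^Q(R) = μ(R)/μ(Q)`. -/
noncomputable def treeEntropy {d : ℕ} {δ : ℝ} (μ : Measure (EuclideanSpace ℝ (Fin d)))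
    (T : CubeTree d δ) (n : ℕ) (x : EuclideanSpace ℝ (Fin d)) : ℝ :=
  ∑ᶠ c ∈ T.children n x,
    Real.negMulLog ((μ (cubeSet c.1 c.2)).toReal / (μ (T.node n x)).toReal)

/-- The Lyapunov exponent `λ(R_n(x)) = Σ_{R ∈ R(Q)} μ^Q(R)·log(ℓ(Q)/ℓ(R))`. -/
noncomputable def treeLyap {d : ℕ} {δ : ℝ} (μ : Measure (EuclideanSpace ℝ (Fin d)))
    (T : CubeTree d δ) (n : ℕ) (x : EuclideanSpace ℝ (Fin d)) : ℝ :=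
  ∑ᶠ c ∈ T.children n x,
    ((μ (cubeSet c.1 c.2)).toReal / (μ (T.node n x)).toReal) * Real.log (T.side n x / c.2)

/-- The upper local dimension of a measure at a point:
`limsup_{r→0⁺} log μ(B(x,r)) / log r` (closed balls), as an extended real. -/
noncomputable def upperLocalDim {d : ℕ} (μ : Measure (EuclideanSpace ℝ (Fin d)))
    (x : EuclideanSpace ℝ (Fin d)) : EReal :=
  Filter.limsup
    (fun r : ℝ => ((Real.log ((μ (Metric.closedBall x r)).toReal) / Real.log r : ℝ) : EReal))
    (nhdsWithin (0 : ℝ) (Set.Ioi 0))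

/-- The (upper) packing dimension of a measure: the `μ`-essential supremum of the
upper local dimensions. -/
noncomputable def packingDim {d : ℕ} (μ : Measure (EuclideanSpace ℝ (Fin d))) : EReal :=
  essSup (fun x => upperLocalDim μ x) μ

namespace CubeAux

variable {d : ℕ}

lemma unitCube_eq_cubeSet : unitCube d = cubeSet (0 : EuclideanSpace ℝ (Fin d)) 1 := by
  ext y; simp [unitCube, cubeSet]

lemma measurableSet_cubeSet (a : EuclideanSpace ℝ (Fin d)) (l : ℝ) :
    MeasurableSet (cubeSet a l) := by
  have : cubeSet a l = ⋂ j : Fin d, (fun y : EuclideanSpace ℝ (Fin d) => y j) ⁻¹'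
      (Set.Ico (a j) (a j + l)) := by
    ext y; simp [cubeSet, Set.mem_Ico, forall_and]
  rw [this]
  refine MeasurableSet.iInter fun j => ?_
  have hm : Measurable (fun y : EuclideanSpace ℝ (Fin d) => y j) :=
    (measurable_pi_apply j).comp (MeasurableEquiv.toLp 2 (Fin d → ℝ)).symm.measurable
  exact hm measurableSet_Ico

lemma measurableSet_unitCube : MeasurableSet (unitCube d) := by
  rw [unitCube_eq_cubeSet]; exact measurableSet_cubeSet _ _

lemma volume_cubeSet (a : EuclideanSpace ℝ (Fin d)) {l : ℝ} (hl : 0 ≤ l) :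
    volume (cubeSet a l) = ENNReal.ofReal l ^ d := by
  have h : cubeSet a l = (MeasurableEquiv.toLp 2 (Fin d → ℝ)).symm ⁻¹'
      (Set.univ.pi (fun j => Set.Ico (a j) (a j + l))) := by
    ext y; simp [cubeSet, Set.mem_pi, Set.mem_Ico]
  rw [h, (EuclideanSpace.volume_preserving_symm_measurableEquiv_toLp (Fin d)).measure_preimage_equiv,
    volume_pi_pi]
  simp [Real.volume_Ico, Finset.prod_const]

lemma volume_pi_box (b : EuclideanSpace ℝ (Fin d)) {L : ℝ} (hL : 0 ≤ L) :
    volume {y : EuclideanSpace ℝ (Fin d) | ∀ j, b j ≤ y j ∧ y j ≤ b j + L}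
      = ENNReal.ofReal L ^ d := by
  have h : {y : EuclideanSpace ℝ (Fin d) | ∀ j, b j ≤ y j ∧ y j ≤ b j + L} =
      (MeasurableEquiv.toLp 2 (Fin d → ℝ)).symm ⁻¹'
      (Set.univ.pi (fun j => Set.Icc (b j) (b j + L))) := by
    ext y
    simp only [Set.mem_setOf_eq, Set.mem_preimage, Set.mem_univ_pi, Set.mem_Icc]
    rfl
  rw [h, (EuclideanSpace.volume_preserving_symm_measurableEquiv_toLp (Fin d)).measure_preimage_equiv,
    volume_pi_pi]
  simp [Real.volume_Icc, Finset.prod_const]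

lemma dist_coord_le (x y : EuclideanSpace ℝ (Fin d)) (j : Fin d) :
    |x j - y j| ≤ dist x y := by
  rw [EuclideanSpace.dist_eq]
  have h1 : |x j - y j| = Real.sqrt ((x j - y j) ^ 2) := by
    rw [Real.sqrt_sq_eq_abs]
  rw [h1]
  apply Real.sqrt_le_sqrt
  calc (x j - y j) ^ 2 = (dist (x j) (y j)) ^ 2 := by rw [Real.dist_eq, sq_abs]
    _ ≤ ∑ i, dist (x i) (y i) ^ 2 :=
        Finset.single_le_sum (f := fun i => dist (x i) (y i) ^ 2) (fun i _ => sq_nonneg _) (Finset.mem_univ j)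

lemma dist_le_of_coords {x y : EuclideanSpace ℝ (Fin d)} {l : ℝ} (hl : 0 ≤ l)
    (h : ∀ j, |x j - y j| ≤ l) : dist x y ≤ Real.sqrt d * l := by
  rw [EuclideanSpace.dist_eq]
  have : ∑ i, dist (x i) (y i) ^ 2 ≤ (d : ℝ) * l ^ 2 := by
    calc ∑ i, dist (x i) (y i) ^ 2 ≤ ∑ _i : Fin d, l ^ 2 := by
          apply Finset.sum_le_sum
          intro i _
          have := h i
          rw [Real.dist_eq]
          exact pow_le_pow_left₀ (abs_nonneg _) (h i) 2
      _ = (d : ℝ) * l ^ 2 := by simp [Finset.sum_const, mul_comm]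
  calc Real.sqrt (∑ i, dist (x i) (y i) ^ 2) ≤ Real.sqrt ((d : ℝ) * l ^ 2) :=
        Real.sqrt_le_sqrt this
    _ = Real.sqrt d * l := by
        rw [Real.sqrt_mul (Nat.cast_nonneg d), Real.sqrt_sq hl]

lemma cube_subset_closedBall {a x : EuclideanSpace ℝ (Fin d)} {l : ℝ} (hl : 0 ≤ l)
    (hx : x ∈ cubeSet a l) : cubeSet a l ⊆ Metric.closedBall x (Real.sqrt d * l) := by
  intro y hy
  rw [Metric.mem_closedBall]
  apply dist_le_of_coords hl
  intro j
  have h1 := hx j; have h2 := hy j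
  rw [abs_le]; constructor <;> nlinarith [h1.1, h1.2, h2.1, h2.2]

/-- the dilated cube: corner `c - 2l`, side `5l`. -/
def big {d : ℕ} (p : EuclideanSpace ℝ (Fin d) × ℝ) : Set (EuclideanSpace ℝ (Fin d)) :=
  cubeSet (WithLp.toLp 2 (fun j => p.1 j - 2 * p.2)) (5 * p.2)

lemma measurableSet_big (p : EuclideanSpace ℝ (Fin d) × ℝ) : MeasurableSet (big p) :=
  measurableSet_cubeSet _ _

lemma closedBall_subset_big {c x : EuclideanSpace ℝ (Fin d)} {l : ℝ} (hl : 0 < l)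
    (hx : x ∈ cubeSet c l) : Metric.closedBall x l ⊆ big (c, l) := by
  intro y hy
  rw [Metric.mem_closedBall] at hy
  intro j
  have h1 := hx j
  have h2 : |y j - x j| ≤ l := le_trans (by rw [← Real.dist_eq]; exact dist_coord_le y x j) hy
  rw [abs_le] at h2
  constructor
  · simp only []; nlinarith [h1.1]
  · simp only []; nlinarith [h1.2]

lemma big_subset_box {c y : EuclideanSpace ℝ (Fin d)} {l s : ℝ} (hl : 0 < l) (hls : l ≤ s)
    (hy : y ∈ big (c, l)) :
    cubeSet c l ⊆ {z : EuclideanSpace ℝ (Fin d) | ∀ j, (y j - 3 * s) ≤ z j ∧ z j ≤ (y j - 3 * s) + 6 * s} := by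
  intro z hz j
  have h1 := hy j
  have h2 := hz j
  simp only [big] at h1
  constructor <;> nlinarith [h1.1, h1.2, h2.1, h2.2]

end CubeAux

namespace CubeAux

variable {d : ℕ} {δ : ℝ}

lemma zero_mem_unitCube : (0 : EuclideanSpace ℝ (Fin d)) ∈ unitCube d := by
  intro j; constructor <;> simp

lemma delta_le_half (T : CubeTree d δ) : δ ≤ 1 / 2 := by
  have h := T.regular 0 0 zero_mem_unitCube
  linarith [h.1, h.2]

lemma node_zero (T : CubeTree d δ) {x : EuclideanSpace ℝ (Fin d)} (hx : x ∈ unitCube d) :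
    T.node 0 x = unitCube d := by
  rw [CubeTree.node, T.corner_zero x hx, T.side_zero x hx, unitCube_eq_cubeSet]

lemma node_antitone (T : CubeTree d δ) {x : EuclideanSpace ℝ (Fin d)} (hx : x ∈ unitCube d)
    {n m : ℕ} (h : n ≤ m) : T.node m x ⊆ T.node n x := by
  induction m with
  | zero => simp_all
  | succ m ih =>
    rcases Nat.lt_or_ge n (m+1) with h' | h'
    · exact (T.nested m x hx).trans (ih (Nat.lt_succ_iff.mp h'))
    · have : n = m + 1 := le_antisymm h h'
      subst this; rfl

lemma node_subset_unit (T : CubeTree d δ) {x : EuclideanSpace ℝ (Fin d)}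
    (hx : x ∈ unitCube d) (n : ℕ) : T.node n x ⊆ unitCube d := by
  rw [← node_zero T hx]; exact node_antitone T hx (Nat.zero_le n)

lemma side_succ_bounds (T : CubeTree d δ) {x : EuclideanSpace ℝ (Fin d)}
    (hx : x ∈ unitCube d) (n : ℕ) :
    δ * T.side n x ≤ T.side (n+1) x ∧ T.side (n+1) x ≤ (1 - δ) * T.side n x := by
  have hp := T.side_pos n x hx
  have hr := T.regular n x hx
  constructor
  · have := (le_div_iff₀ hp).mp hr.1; linarith
  · have := (div_le_iff₀ hp).mp hr.2; linarith

lemma side_le_pow (T : CubeTree d δ) {x : EuclideanSpace ℝ (Fin d)}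
    (hx : x ∈ unitCube d) (n : ℕ) : T.side n x ≤ (1 - δ) ^ n := by
  induction n with
  | zero => simp [T.side_zero x hx]
  | succ n ih =>
    have h := (side_succ_bounds T hx n).2
    have hδ2 := delta_le_half T
    have hδ0 : 0 < δ ∨ True := Or.inr trivial
    calc T.side (n+1) x ≤ (1 - δ) * T.side n x := h
      _ ≤ (1 - δ) * (1 - δ) ^ n := by
          apply mul_le_mul_of_nonneg_left ih
          have h0 := T.regular 0 0 zero_mem_unitCube
          linarith [h0.1, h0.2, (T.side_pos 1 0 zero_mem_unitCube),
            (T.side_pos 0 0 zero_mem_unitCube)]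
      _ = (1 - δ) ^ (n + 1) := by ring

lemma delta_nonneg (T : CubeTree d δ) (hδ : 0 < δ) : (0:ℝ) ≤ 1 - δ := by
  have := delta_le_half T; linarith

lemma pow_le_side (T : CubeTree d δ) (hδ : 0 < δ) {x : EuclideanSpace ℝ (Fin d)}
    (hx : x ∈ unitCube d) (n : ℕ) : δ ^ n ≤ T.side n x := by
  induction n with
  | zero => simp [T.side_zero x hx]
  | succ n ih =>
    have h := (side_succ_bounds T hx n).1
    calc δ ^ (n+1) = δ * δ ^ n := by ring
      _ ≤ δ * T.side n x := by apply mul_le_mul_of_nonneg_left ih hδ.le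
      _ ≤ T.side (n+1) x := h

lemma side_le_one (T : CubeTree d δ) (hδ : 0 < δ) {x : EuclideanSpace ℝ (Fin d)}
    (hx : x ∈ unitCube d) (n : ℕ) : T.side n x ≤ 1 := by
  have h := side_le_pow T hx n
  have hδ2 := delta_le_half T
  calc T.side n x ≤ (1 - δ) ^ n := h
    _ ≤ 1 := pow_le_one₀ (by linarith) (by linarith)

lemma pair_eq_of_mem (T : CubeTree d δ) {n : ℕ} {x y : EuclideanSpace ℝ (Fin d)}
    (hx : x ∈ unitCube d) (hy : y ∈ T.node n x) :
    T.corner n y = T.corner n x ∧ T.side n y = T.side n x :=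
  T.compat n x hx y (node_subset_unit T hx n hy) hy

/-- all level-`n` cubes of the tree. -/
def levels (T : CubeTree d δ) (n : ℕ) : Set (EuclideanSpace ℝ (Fin d) × ℝ) :=
  (fun x => (T.corner n x, T.side n x)) '' (unitCube d)

variable {T : CubeTree d δ}

lemma mem_levels_self {x : EuclideanSpace ℝ (Fin d)} (hx : x ∈ unitCube d) (n : ℕ) :
    (T.corner n x, T.side n x) ∈ levels T n := ⟨x, hx, rfl⟩

lemma levels_spec {n : ℕ} {p : EuclideanSpace ℝ (Fin d) × ℝ} (hp : p ∈ levels T n) :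
    ∃ x ∈ unitCube d, T.corner n x = p.1 ∧ T.side n x = p.2 := by
  obtain ⟨x, hx, rfl⟩ := hp; exact ⟨x, hx, rfl, rfl⟩

lemma levels_side_bounds (hδ : 0 < δ) {n : ℕ} {p : EuclideanSpace ℝ (Fin d) × ℝ}
    (hp : p ∈ levels T n) : δ ^ n ≤ p.2 ∧ p.2 ≤ (1 - δ) ^ n := by
  obtain ⟨x, hx, h1, h2⟩ := levels_spec hp
  rw [← h2]; exact ⟨pow_le_side T hδ hx n, side_le_pow T hx n⟩

lemma levels_cube_subset_unit {n : ℕ} {p : EuclideanSpace ℝ (Fin d) × ℝ}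
    (hp : p ∈ levels T n) : cubeSet p.1 p.2 ⊆ unitCube d := by
  obtain ⟨x, hx, h1, h2⟩ := levels_spec hp
  rw [← h1, ← h2]; exact node_subset_unit T hx n

lemma levels_pair_of_mem {n : ℕ} {p : EuclideanSpace ℝ (Fin d) × ℝ} (hp : p ∈ levels T n)
    {z : EuclideanSpace ℝ (Fin d)} (hz : z ∈ cubeSet p.1 p.2) :
    (T.corner n z, T.side n z) = p := by
  obtain ⟨x, hx, rfl⟩ := hp
  have := pair_eq_of_mem T hx hz
  rw [this.1, this.2]

lemma levels_disjoint {n : ℕ} {p q : EuclideanSpace ℝ (Fin d) × ℝ} (hp : p ∈ levels T n)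
    (hq : q ∈ levels T n) (hpq : p ≠ q) : Disjoint (cubeSet p.1 p.2) (cubeSet q.1 q.2) := by
  rw [Set.disjoint_left]
  intro z hzp hzq
  exact hpq ((levels_pair_of_mem hp hzp).symm.trans (levels_pair_of_mem hq hzq))

lemma levels_finite (T : CubeTree d δ) (n : ℕ) : (levels T n).Finite := by
  induction n with
  | zero =>
    apply Set.Finite.subset (Set.finite_singleton ((0 : EuclideanSpace ℝ (Fin d)), (1 : ℝ)))
    rintro p ⟨x, hx, rfl⟩
    simp [T.corner_zero x hx, T.side_zero x hx]
  | succ n ih =>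
    have hsub : levels T (n+1) ⊆ ⋃ p ∈ levels T n,
        {c : EuclideanSpace ℝ (Fin d) × ℝ |
          ∃ y ∈ unitCube d, y ∈ cubeSet p.1 p.2 ∧ c = (T.corner (n+1) y, T.side (n+1) y)} := by
      rintro q ⟨y, hy, rfl⟩
      refine Set.mem_biUnion (mem_levels_self hy n) ?_
      exact ⟨y, hy, T.mem_node n y hy, rfl⟩
    apply Set.Finite.subset _ hsub
    apply Set.Finite.biUnion ih
    intro p hp
    obtain ⟨x, hx, h1, h2⟩ := levels_spec hp
    have := T.finiteChildren n x hx
    rw [← h1, ← h2]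
    exact this

end CubeAux

namespace CubeAux

variable {d : ℕ} {δ : ℝ}

/-- The finset of level-`n` cubes. -/
noncomputable def levelF (T : CubeTree d δ) (n : ℕ) :
    Finset (EuclideanSpace ℝ (Fin d) × ℝ) := (levels_finite T n).toFinset

lemma mem_levelF {T : CubeTree d δ} {n : ℕ} {p : EuclideanSpace ℝ (Fin d) × ℝ} :
    p ∈ levelF T n ↔ p ∈ levels T n := Set.Finite.mem_toFinset _

/-- scale class of a cube: least `k` with `δ^(k+1) < l`. -/
noncomputable def sclass (δ l : ℝ) : ℕ := sInf {k : ℕ | δ ^ (k + 1) < l}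

lemma sclass_spec (hδ : 0 < δ) (hδ1 : δ < 1) {l : ℝ} (hl : 0 < l) :
    δ ^ (sclass δ l + 1) < l := by
  have hne : {k : ℕ | δ ^ (k + 1) < l}.Nonempty := by
    obtain ⟨k, hk⟩ := exists_pow_lt_of_lt_one hl hδ1
    exact ⟨k, lt_of_le_of_lt (pow_le_pow_of_le_one hδ.le hδ1.le (Nat.le_succ k)) hk⟩
  exact Nat.sInf_mem hne

lemma sclass_le {n : ℕ} (hδ : 0 < δ) (hδ1 : δ < 1) {l : ℝ} (hl : δ ^ n ≤ l) :
    sclass δ l ≤ n := by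
  apply Nat.sInf_le
  exact lt_of_lt_of_le (pow_lt_pow_right_of_lt_one₀ hδ hδ1 (Nat.lt_succ_self n)) hl

lemma sclass_ge (hδ : 0 < δ) (hδ1 : δ < 1) {l : ℝ} (hl1 : l ≤ 1) :
    l ≤ δ ^ (sclass δ l) := by
  rcases Nat.eq_zero_or_pos (sclass δ l) with h0 | hpos
  · rw [h0]; simpa using hl1
  · by_contra hcon
    push_neg at hcon
    have hmem : sclass δ l - 1 ∈ {k : ℕ | δ ^ (k + 1) < l} := by
      show δ ^ (sclass δ l - 1 + 1) < l
      rwa [Nat.sub_add_cancel hpos]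
    have h2 : sclass δ l ≤ sclass δ l - 1 := Nat.sInf_le hmem
    omega

open scoped Classical in
/-- Multiplicity bound: at most `(n+1) * C` level-`n` cubes have dilation containing `y`. -/
lemma multiplicity_bound (T : CubeTree d δ) (hδ : 0 < δ) (n : ℕ)
    (y : EuclideanSpace ℝ (Fin d)) :
    (((levelF T n).filter (fun p => y ∈ big p)).card : ℕ)
      ≤ (n + 1) * ⌈(6 / δ) ^ d⌉₊ := by
  classical
  have hδ1 : δ < 1 := lt_of_le_of_lt (delta_le_half T) (by norm_num)
  set C := ⌈(6 / δ) ^ d⌉₊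
  set G := (levelF T n).filter (fun p => y ∈ big p) with hG
  have hmap : ∀ p ∈ G, sclass δ p.2 ∈ Finset.range (n + 1) := by
    intro p hp
    rw [hG, Finset.mem_filter, mem_levelF] at hp
    have hb := (levels_side_bounds hδ hp.1).1
    rw [Finset.mem_range, Nat.lt_succ_iff]
    exact sclass_le hδ hδ1 hb
  rw [Finset.card_eq_sum_card_fiberwise hmap]
  have hfiber : ∀ k ∈ Finset.range (n + 1),
      (G.filter (fun p => sclass δ p.2 = k)).card ≤ C := by
    intro k _
    set H := G.filter (fun p => sclass δ p.2 = k) with hH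
    -- facts about members of H
    have hmem : ∀ p ∈ H, p ∈ levels T n ∧ y ∈ big p ∧ 0 < p.2 ∧
        δ ^ (k + 1) < p.2 ∧ p.2 ≤ δ ^ k := by
      intro p hp
      rw [hH, Finset.mem_filter, hG, Finset.mem_filter, mem_levelF] at hp
      obtain ⟨⟨h1, h2⟩, h3⟩ := hp
      have hb := levels_side_bounds hδ h1
      have hpos : 0 < p.2 := lt_of_lt_of_le (pow_pos hδ n) hb.1
      have hle1 : p.2 ≤ 1 := le_trans hb.2 (pow_le_one₀ (by linarith) (by linarith))
      refine ⟨h1, h2, hpos, ?_, ?_⟩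
      · rw [← h3]; exact sclass_spec hδ hδ1 hpos
      · rw [← h3]; exact sclass_ge hδ hδ1 hle1
    -- volume argument
    have hdisj : (↑H : Set (EuclideanSpace ℝ (Fin d) × ℝ)).PairwiseDisjoint
        (fun p => cubeSet p.1 p.2) := by
      intro p hp q hq hpq
      exact levels_disjoint (hmem p hp).1 (hmem q hq).1 hpq
    have hvol : ∑ p ∈ H, volume (cubeSet p.1 p.2)
        = volume (⋃ p ∈ H, cubeSet p.1 p.2) := by
      rw [measure_biUnion_finset hdisj (fun p _ => measurableSet_cubeSet p.1 p.2)]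
    have hbox : (⋃ p ∈ H, cubeSet p.1 p.2) ⊆
        {z : EuclideanSpace ℝ (Fin d) | ∀ j, (y j - 3 * δ ^ k) ≤ z j ∧
          z j ≤ (y j - 3 * δ ^ k) + 6 * δ ^ k} := by
      intro z hz
      rw [Set.mem_iUnion₂] at hz
      obtain ⟨p, hp, hzp⟩ := hz
      obtain ⟨_, hy', hpos, _, hle⟩ := hmem p hp
      have := big_subset_box (y := y) hpos hle (by rwa [Prod.mk.eta] : y ∈ big (p.1, p.2))
      exact this hzp
    have hvol2 : volume (⋃ p ∈ H, cubeSet p.1 p.2) ≤ ENNReal.ofReal (6 * δ ^ k) ^ d := by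
      calc volume (⋃ p ∈ H, cubeSet p.1 p.2)
          ≤ volume {z : EuclideanSpace ℝ (Fin d) | ∀ j, (y j - 3 * δ ^ k) ≤ z j ∧
            z j ≤ (y j - 3 * δ ^ k) + 6 * δ ^ k} := measure_mono hbox
        _ = ENNReal.ofReal (6 * δ ^ k) ^ d := volume_pi_box (WithLp.toLp 2 (fun j => y j - 3 * δ ^ k)) (by positivity)
    have hlower : (H.card : ℝ≥0∞) * ENNReal.ofReal (δ ^ (k + 1)) ^ d
        ≤ ∑ p ∈ H, volume (cubeSet p.1 p.2) := by
      rw [← nsmul_eq_mul]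
      apply Finset.card_nsmul_le_sum
      intro p hp
      obtain ⟨_, _, hpos, hgt, _⟩ := hmem p hp
      rw [volume_cubeSet p.1 hpos.le]
      exact pow_le_pow_left' (ENNReal.ofReal_le_ofReal hgt.le) d
    -- combine
    have hAne : ENNReal.ofReal (δ ^ (k + 1)) ^ d ≠ 0 := by
      apply pow_ne_zero
      simp [ENNReal.ofReal_eq_zero, not_le]
      positivity
    have hAtop : ENNReal.ofReal (δ ^ (k + 1)) ^ d ≠ ⊤ := by
      exact ENNReal.pow_ne_top ENNReal.ofReal_ne_top
    have hcard : (H.card : ℝ≥0∞) ≤ (C : ℝ≥0∞) := by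
      have h1 : (H.card : ℝ≥0∞) * ENNReal.ofReal (δ ^ (k + 1)) ^ d
          ≤ ENNReal.ofReal (6 * δ ^ k) ^ d := le_trans hlower (hvol ▸ hvol2)
      have h2 : (H.card : ℝ≥0∞) ≤ ENNReal.ofReal (6 * δ ^ k) ^ d
          / ENNReal.ofReal (δ ^ (k + 1)) ^ d :=
        (ENNReal.le_div_iff_mul_le (Or.inl hAne) (Or.inl hAtop)).mpr h1
      have h3 : ENNReal.ofReal (6 * δ ^ k) ^ d / ENNReal.ofReal (δ ^ (k + 1)) ^ d
          = ENNReal.ofReal ((6 / δ) ^ d) := by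
        rw [← ENNReal.ofReal_pow (by positivity), ← ENNReal.ofReal_pow (by positivity),
          ← ENNReal.ofReal_div_of_pos (by positivity)]
        congr 1
        rw [← div_pow]
        congr 1
        field_simp
        ring
      have h4 : ENNReal.ofReal ((6 / δ) ^ d) ≤ (C : ℝ≥0∞) := by
        rw [← ENNReal.ofReal_natCast]
        exact ENNReal.ofReal_le_ofReal (Nat.le_ceil _)
      exact h2.trans (h3 ▸ h4)
    exact_mod_cast hcard
  calc ∑ k ∈ Finset.range (n + 1), (G.filter (fun p => sclass δ p.2 = k)).card
      ≤ ∑ _k ∈ Finset.range (n + 1), C := Finset.sum_le_sum hfiber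
    _ = (n + 1) * C := by simp [Finset.sum_const, Nat.mul_comm]

end CubeAux

namespace CubeAux

variable {d : ℕ} {δ : ℝ}

open scoped Classical in
lemma sum_big_le (T : CubeTree d δ) (hδ : 0 < δ) (μ : Measure (EuclideanSpace ℝ (Fin d)))
    [IsProbabilityMeasure μ] (n : ℕ) :
    ∑ p ∈ levelF T n, μ (big p) ≤ (((n + 1) * ⌈(6 / δ) ^ d⌉₊ : ℕ) : ℝ≥0∞) := by
  classical
  have h1 : ∀ p ∈ levelF T n, μ (big p) = ∫⁻ y, (big p).indicator (fun _ => 1) y ∂μ := by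
    intro p _
    rw [lintegral_indicator (measurableSet_big p)]
    simp
  rw [Finset.sum_congr rfl h1, ← lintegral_finset_sum _ (fun p _ =>
    (measurable_const.indicator (measurableSet_big p)))]
  calc ∫⁻ y, ∑ p ∈ levelF T n, (big p).indicator (fun _ => 1) y ∂μ
      ≤ ∫⁻ _y, (((n + 1) * ⌈(6 / δ) ^ d⌉₊ : ℕ) : ℝ≥0∞) ∂μ := by
        apply lintegral_mono
        intro y
        have hcount : ∑ p ∈ levelF T n, (big p).indicator (fun _ => (1:ℝ≥0∞)) y
            = (((levelF T n).filter (fun p => y ∈ big p)).card : ℝ≥0∞) := by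
          rw [Finset.card_filter]
          rw [Nat.cast_sum]
          apply Finset.sum_congr rfl
          intro p _
          by_cases h : y ∈ big p <;> simp [Set.indicator_apply, h]
        refine le_trans (le_of_eq hcount) ?_
        exact_mod_cast Nat.cast_le.mpr (multiplicity_bound T hδ n y)
    _ = (((n + 1) * ⌈(6 / δ) ^ d⌉₊ : ℕ) : ℝ≥0∞) := by
        rw [lintegral_const, measure_univ, mul_one]

open scoped Classical in
lemma measure_bad_le (T : CubeTree d δ) (hδ : 0 < δ) (μ : Measure (EuclideanSpace ℝ (Fin d)))
    [IsProbabilityMeasure μ] (n : ℕ) {t : ℝ≥0∞} (ht0 : t ≠ 0) (httop : t ≠ ⊤) :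
    μ {x | x ∈ unitCube d ∧
        t * μ (cubeSet (T.corner n x) (T.side n x)) < μ (big (T.corner n x, T.side n x))}
      ≤ (((n + 1) * ⌈(6 / δ) ^ d⌉₊ : ℕ) : ℝ≥0∞) / t := by
  classical
  set A := {x | x ∈ unitCube d ∧
      t * μ (cubeSet (T.corner n x) (T.side n x)) < μ (big (T.corner n x, T.side n x))}
  set badF := (levelF T n).filter
    (fun p => t * μ (cubeSet p.1 p.2) < μ (big p)) with hbadF
  have hsub : A ⊆ ⋃ p ∈ badF, cubeSet p.1 p.2 := by
    intro x hx
    obtain ⟨hxU, hxbad⟩ := hx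
    have hp : (T.corner n x, T.side n x) ∈ badF := by
      rw [hbadF, Finset.mem_filter, mem_levelF]
      exact ⟨mem_levels_self hxU n, hxbad⟩
    exact Set.mem_iUnion₂.mpr ⟨(T.corner n x, T.side n x), hp, T.mem_node n x hxU⟩
  calc μ A ≤ ∑ p ∈ badF, μ (cubeSet p.1 p.2) :=
        le_trans (measure_mono hsub) (measure_biUnion_finset_le _ _)
    _ ≤ ∑ p ∈ badF, μ (big p) / t := by
        apply Finset.sum_le_sum
        intro p hp
        rw [hbadF, Finset.mem_filter] at hp
        rw [ENNReal.le_div_iff_mul_le (Or.inl ht0) (Or.inl httop)]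
        rw [mul_comm]
        exact hp.2.le
    _ = (∑ p ∈ badF, μ (big p)) / t := by
        rw [ENNReal.div_eq_inv_mul, Finset.mul_sum]
        apply Finset.sum_congr rfl
        intro p _
        rw [ENNReal.div_eq_inv_mul]
    _ ≤ (((n + 1) * ⌈(6 / δ) ^ d⌉₊ : ℕ) : ℝ≥0∞) / t := by
        apply ENNReal.div_le_div_right
        exact le_trans (Finset.sum_le_sum_of_subset (Finset.filter_subset _ _)) (sum_big_le T hδ μ n)

set_option maxHeartbeats 1000000 in
/-- Borel–Cantelli: a.e. eventually `μ(big(R_n x)) ≤ e^(ε n) μ(R_n x)`. -/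
lemma ae_eventually_big_small (T : CubeTree d δ) (hδ : 0 < δ)
    (μ : Measure (EuclideanSpace ℝ (Fin d))) [IsProbabilityMeasure μ]
    {ε : ℝ} (hε : 0 < ε) :
    ∀ᵐ x ∂μ, ∀ᶠ n in Filter.atTop, x ∈ unitCube d →
      μ (big (T.corner n x, T.side n x))
        ≤ ENNReal.ofReal (Real.exp (ε * n)) * μ (cubeSet (T.corner n x) (T.side n x)) := by
  classical
  set C : ℕ := ⌈(6 / δ) ^ d⌉₊
  set s : ℕ → Set (EuclideanSpace ℝ (Fin d)) := fun n =>
    {x | x ∈ unitCube d ∧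
      ENNReal.ofReal (Real.exp (ε * n)) * μ (cubeSet (T.corner n x) (T.side n x))
        < μ (big (T.corner n x, T.side n x))} with hs
  have hbound : ∀ n, μ (s n) ≤ ENNReal.ofReal (((n + 1) * C : ℕ) * Real.exp (-(ε * n))) := by
    intro n
    have ht0 : ENNReal.ofReal (Real.exp (ε * n)) ≠ 0 := by
      simp [ENNReal.ofReal_eq_zero, not_le, Real.exp_pos]
    have httop : ENNReal.ofReal (Real.exp (ε * n)) ≠ ⊤ := ENNReal.ofReal_ne_top
    refine le_trans (measure_bad_le T hδ μ n ht0 httop) ?_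
    rw [← ENNReal.ofReal_natCast (((n+1) * C : ℕ)),
      ← ENNReal.ofReal_div_of_pos (Real.exp_pos _)]
    apply ENNReal.ofReal_le_ofReal
    rw [div_eq_mul_inv, ← Real.exp_neg]
  have hsum : ∑' n, μ (s n) ≠ ⊤ := by
    have hsummable : Summable (fun n : ℕ => (((n + 1) * C : ℕ) : ℝ) * Real.exp (-(ε * n))) := by
      have hr : ∀ n : ℕ, Real.exp (-(ε * n)) = (Real.exp (-ε)) ^ n := by
        intro n
        rw [← Real.exp_nat_mul]
        congr 1
        ring
      have h1 : Summable (fun n : ℕ => ((n : ℝ) + 1) * (C : ℝ) * (Real.exp (-ε)) ^ n) := by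
        have hlt : ‖Real.exp (-ε)‖ < 1 := by
          rw [Real.norm_eq_abs, abs_of_pos (Real.exp_pos _)]
          exact Real.exp_lt_one_iff.mpr (by linarith)
        have h2 : Summable (fun n : ℕ => (n : ℝ) ^ 1 * Real.exp (-ε) ^ n) :=
          summable_pow_mul_geometric_of_norm_lt_one 1 hlt
        have h3 : Summable (fun n : ℕ => Real.exp (-ε) ^ n) :=
          summable_geometric_of_norm_lt_one hlt
        have h4 := (h2.add h3).mul_right (C : ℝ)
        apply Summable.congr h4
        intro n
        simp only [pow_one]
        ring
      apply Summable.congr h1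
      intro n
      rw [hr]
      push_cast
      ring
    have hle : ∑' n, μ (s n)
        ≤ ENNReal.ofReal (∑' n, (((n + 1) * C : ℕ) : ℝ) * Real.exp (-(ε * n))) := by
      calc ∑' n, μ (s n) ≤ ∑' n, ENNReal.ofReal (((n + 1) * C : ℕ) * Real.exp (-(ε * n))) :=
            ENNReal.tsum_le_tsum hbound
        _ = ENNReal.ofReal (∑' n, (((n + 1) * C : ℕ) : ℝ) * Real.exp (-(ε * n))) :=
            (ENNReal.ofReal_tsum_of_nonneg (fun n => by positivity) hsummable).symm
    exact ne_top_of_le_ne_top ENNReal.ofReal_ne_top hle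
  have := MeasureTheory.ae_finite_setOf_mem (μ := μ) hsum
  filter_upwards [this] with x hx
  have : ∀ᶠ n in Filter.atTop, x ∉ s n := by
    rw [Filter.eventually_atTop]
    rcases Set.Finite.bddAbove hx with ⟨N, hN⟩
    refine ⟨N + 1, fun n hn hmem => ?_⟩
    have := hN (Set.mem_setOf_eq ▸ hmem : n ∈ {i | x ∈ s i})
    omega
  filter_upwards [this] with n hn hxU
  rw [hs] at hn
  simp only [Set.mem_setOf_eq, not_and, not_lt] at hn
  exact hn hxU

end CubeAux

namespace CubeAux

variable {d : ℕ} {δ : ℝ}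

lemma side_antitone (T : CubeTree d δ) (hδ : 0 < δ) {x : EuclideanSpace ℝ (Fin d)}
    (hx : x ∈ unitCube d) {i k : ℕ} (h : i ≤ k) : T.side k x ≤ T.side i x := by
  induction k with
  | zero => simp_all
  | succ k ih =>
    rcases Nat.lt_or_ge i (k+1) with h' | h'
    · have h1 := (side_succ_bounds T hx k).2
      have h2 := T.side_pos k x hx
      have h3 := ih (Nat.lt_succ_iff.mp h')
      nlinarith
    · have : i = k + 1 := le_antisymm h h'
      subst this; rfl

lemma side_tendsto_zero (T : CubeTree d δ) (hδ : 0 < δ) {x : EuclideanSpace ℝ (Fin d)}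
    (hx : x ∈ unitCube d) : Filter.Tendsto (fun n => T.side n x) Filter.atTop (nhds 0) := by
  have h1 : Filter.Tendsto (fun n : ℕ => (1 - δ) ^ n) Filter.atTop (nhds 0) := by
    apply tendsto_pow_atTop_nhds_zero_of_lt_one
    · linarith [delta_le_half T]
    · linarith
  exact squeeze_zero (fun n => (T.side_pos n x hx).le) (fun n => side_le_pow T hx n) h1

lemma ball_meas_pos (T : CubeTree d δ) (hδ : 0 < δ) (μ : Measure (EuclideanSpace ℝ (Fin d)))
    {x : EuclideanSpace ℝ (Fin d)} (hx : x ∈ unitCube d)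
    (hpos : ∀ n, μ (T.node n x) ≠ 0) {r : ℝ} (hr : 0 < r) :
    μ (Metric.closedBall x r) ≠ 0 := by
  have h0 : Filter.Tendsto (fun n => Real.sqrt d * T.side n x) Filter.atTop (nhds 0) := by
    simpa using (side_tendsto_zero T hδ hx).const_mul (Real.sqrt d)
  obtain ⟨k, hk⟩ := (h0.eventually (gt_mem_nhds hr)).exists
  have hsub : T.node k x ⊆ Metric.closedBall x r := by
    refine le_trans ?_ (Metric.closedBall_subset_closedBall hk.le)
    exact cube_subset_closedBall (T.side_pos k x hx).le (T.mem_node k x hx)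
  intro h0'
  exact hpos k (measure_mono_null hsub h0')

end CubeAux

namespace CubeAux

variable {d : ℕ} {δ : ℝ}

set_option maxHeartbeats 1000000 in
/-- Direction 1: upper local (ball) dimension is at most the tree limsup, at every point
of the unit cube where all tree cubes have positive measure. -/
lemma localdim_le_tree (T : CubeTree d δ) (hδ : 0 < δ) (hd : 1 ≤ d)
    (μ : Measure (EuclideanSpace ℝ (Fin d))) [IsProbabilityMeasure μ]
    {x : EuclideanSpace ℝ (Fin d)} (hxU : x ∈ unitCube d)
    (hpos : ∀ n, μ (T.node n x) ≠ 0) :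
    Filter.limsup
      (fun r : ℝ => ((Real.log ((μ (Metric.closedBall x r)).toReal) / Real.log r : ℝ) : EReal))
      (nhdsWithin (0 : ℝ) (Set.Ioi 0))
    ≤ Filter.limsup (fun n : ℕ =>
      ((Real.log (1 / (μ (T.node n x)).toReal) / Real.log (1 / T.side n x) : ℝ) : EReal))
      Filter.atTop := by
  classical
  set ℓ : ℕ → ℝ := fun n => T.side n x with hℓdef
  set mn : ℕ → ℝ := fun n => (μ (T.node n x)).toReal with hmndef
  set L : ℕ → ℝ := fun n => Real.log (1 / mn n) / Real.log (1 / ℓ n) with hLdef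
  have hgoalfun : (fun n : ℕ =>
      ((Real.log (1 / (μ (T.node n x)).toReal) / Real.log (1 / T.side n x) : ℝ) : EReal))
      = (fun n : ℕ => ((L n : ℝ) : EReal)) := by
    funext n
    rw [hLdef, hmndef, hℓdef]
  rw [hgoalfun]
  -- basic facts
  have hℓpos : ∀ n, 0 < ℓ n := fun n => T.side_pos n x hxU
  have hℓle1 : ∀ n, ℓ n ≤ 1 := fun n => side_le_one T hδ hxU n
  have hmpos : ∀ n, 0 < mn n := fun n => ENNReal.toReal_pos (hpos n) (measure_ne_top μ _)
  have hmle1 : ∀ n, mn n ≤ 1 := by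
    intro n
    have h := prob_le_one (μ := μ) (s := T.node n x)
    calc mn n ≤ (1 : ℝ≥0∞).toReal := ENNReal.toReal_mono ENNReal.one_ne_top h
      _ = 1 := by simp
  have ha0 : ∀ n, 0 ≤ Real.log (1 / mn n) :=
    fun n => Real.log_nonneg (one_le_one_div (hmpos n) (hmle1 n))
  have hs0 : ∀ n, 0 ≤ Real.log (1 / ℓ n) :=
    fun n => Real.log_nonneg (one_le_one_div (hℓpos n) (hℓle1 n))
  have hL0 : ∀ n, 0 ≤ L n := fun n => div_nonneg (ha0 n) (hs0 n)
  have hLf : ∀ n, L n = Real.log (1 / mn n) / Real.log (1 / ℓ n) := fun n => by rw [hLdef]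
  have hmn : ∀ n, mn n = (μ (T.node n x)).toReal := fun n => by rw [hmndef]
  have hσ : ∀ n, δ * ℓ n ≤ ℓ (n+1) := fun n => (side_succ_bounds T hxU n).1
  have hpow : ∀ n, ℓ n ≤ (1 - δ) ^ n := fun n => side_le_pow T hxU n
  have hanti : ∀ i k : ℕ, i ≤ k → ℓ k ≤ ℓ i := fun i k h => side_antitone T hδ hxU h
  have hsqd : 1 ≤ Real.sqrt d := by
    rw [show (1:ℝ) = Real.sqrt 1 by simp]
    exact Real.sqrt_le_sqrt (by exact_mod_cast hd)
  have hsqd0 : 0 < Real.sqrt d := lt_of_lt_of_le one_pos hsqd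
  have htend0 : Filter.Tendsto (fun n => Real.sqrt d * ℓ n) Filter.atTop (nhds 0) := by
    simpa using (side_tendsto_zero T hδ hxU).const_mul (Real.sqrt d)
  have hcube : ∀ n, T.node n x ⊆ Metric.closedBall x (Real.sqrt d * ℓ n) :=
    fun n => cube_subset_closedBall (hℓpos n).le (T.mem_node n x hxU)
  have hδ1 : δ < 1 := lt_of_le_of_lt (delta_le_half T) (by norm_num)
  clear_value ℓ mn L
  clear hℓdef hmndef hLdef hgoalfun
  -- reduce to: for every real c above the tree limsup, the ball limsup is ≤ c
  refine EReal.le_of_forall_lt_iff_le.mp (fun c hc => ?_)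
  have hev : ∀ᶠ n in Filter.atTop, L n < c := by
    filter_upwards [Filter.eventually_lt_of_limsup_lt hc] with n hn
    exact EReal.coe_lt_coe_iff.mp hn
  have hcpos : (0:ℝ) < c := by
    obtain ⟨n, hn⟩ := hev.exists
    linarith [hL0 n]
  obtain ⟨b, hb1, hb2⟩ := EReal.exists_between_coe_real hc
  have hbc : b < c := by exact_mod_cast hb2
  have hbev : ∀ᶠ n in Filter.atTop, L n ≤ b := by
    filter_upwards [Filter.eventually_lt_of_limsup_lt hb1] with n hn
    exact le_of_lt (EReal.coe_lt_coe_iff.mp hn)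
  obtain ⟨N, hN⟩ := Filter.eventually_atTop.mp hbev
  have hb0 : 0 ≤ b := le_trans (hL0 N) (hN N le_rfl)
  -- constants
  set c₁ : ℝ := Real.log (1/(1-δ)) with hc₁def
  have hc₁ : 0 < c₁ := Real.log_pos (one_lt_one_div (by linarith) (by linarith))
  have hsK : ∀ k : ℕ, (k : ℝ) * c₁ ≤ Real.log (1/ℓ k) := by
    intro k
    have h2 : (1:ℝ)/(1-δ)^k ≤ 1/ℓ k :=
      one_div_le_one_div_of_le (hℓpos k) (hpow k)
    calc (k : ℝ) * c₁ = Real.log ((1/(1-δ))^k) := by rw [Real.log_pow]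
      _ = Real.log (1/(1-δ)^k) := by rw [div_pow, one_pow]
      _ ≤ Real.log (1/ℓ k) :=
          Real.log_le_log (one_div_pos.mpr (pow_pos (by linarith) k)) h2
  clear_value c₁
  set C₀ : ℝ := Real.log (Real.sqrt d) + Real.log (1/δ) with hC₀def
  have hlog_sqd : 0 ≤ Real.log (Real.sqrt d) := Real.log_nonneg hsqd
  have hlog_invδ : 0 ≤ Real.log (1/δ) := Real.log_nonneg (one_le_one_div hδ (by linarith))
  have hC₀ : 0 ≤ C₀ := add_nonneg hlog_sqd hlog_invδ
  clear_value C₀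
  set K : ℝ := max (c * C₀ / (c - b) + 1) (C₀ + 1) with hKdef
  have hK1 : c * C₀ / (c - b) + 1 ≤ K := le_max_left _ _
  have hKC : C₀ + 1 ≤ K := le_max_right _ _
  clear_value K
  set m : ℕ := max N (max 1 ⌈K / c₁⌉₊) with hmdef
  have hmN : N ≤ m := le_max_left _ _
  have hmceil : ⌈K / c₁⌉₊ ≤ m := le_trans (le_max_right _ _) (le_max_right N _)
  clear_value m
  have hm : ∀ k : ℕ, m ≤ k → K ≤ Real.log (1/ℓ k) := by
    intro k hk
    have h1 : (⌈K / c₁⌉₊ : ℝ) ≤ k := by exact_mod_cast le_trans hmceil hk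
    have h2 : K / c₁ ≤ (k:ℝ) := le_trans (Nat.le_ceil _) h1
    have h3 : K ≤ (k:ℝ) * c₁ := by
      rw [div_le_iff₀ hc₁] at h2
      linarith
    exact le_trans h3 (hsK k)
  -- the eventual bound on the ball quotient
  have hqev : ∀ᶠ r in nhdsWithin (0:ℝ) (Set.Ioi 0),
      Real.log ((μ (Metric.closedBall x r)).toReal) / Real.log r ≤ c := by
    have hmin0 : (0:ℝ) < min 1 (Real.sqrt d * ℓ m) :=
      lt_min one_pos (mul_pos hsqd0 (hℓpos m))
    filter_upwards [Ioo_mem_nhdsGT hmin0] with r hr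
    obtain ⟨hr0, hrlt⟩ := hr
    have hr1 : r < 1 := lt_of_lt_of_le hrlt (min_le_left _ _)
    have hrm : r < Real.sqrt d * ℓ m := lt_of_lt_of_le hrlt (min_le_right _ _)
    -- find the level j = n+1 where the scale drops below r
    have hSne : {k : ℕ | Real.sqrt d * ℓ k < r}.Nonempty :=
      (htend0.eventually (gt_mem_nhds hr0)).exists
    have hjS : sInf {k : ℕ | Real.sqrt d * ℓ k < r} ∈ {k : ℕ | Real.sqrt d * ℓ k < r} :=
      Nat.sInf_mem hSne
    set j := sInf {k : ℕ | Real.sqrt d * ℓ k < r} with hjdef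
    have hjm : m < j := by
      by_contra h
      push_neg at h
      have h1 : ℓ m ≤ ℓ j := hanti j m h
      have h2 : Real.sqrt d * ℓ m ≤ Real.sqrt d * ℓ j :=
        mul_le_mul_of_nonneg_left h1 hsqd0.le
      have h3 : Real.sqrt d * ℓ j < r := hjS
      linarith
    obtain ⟨n, hn⟩ : ∃ n, j = n + 1 :=
      ⟨j - 1, (Nat.succ_pred_eq_of_pos (lt_of_le_of_lt (Nat.zero_le m) hjm)).symm⟩
    have hmin : r ≤ Real.sqrt d * ℓ n := by
      have hnS : n ∉ {k : ℕ | Real.sqrt d * ℓ k < r} :=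
        Nat.notMem_of_lt_sInf (by omega : n < sInf {k : ℕ | Real.sqrt d * ℓ k < r})
      simpa using not_lt.mp (by simpa using hnS)
    have hup : Real.sqrt d * ℓ (n+1) < r := by
      have := hjS
      rw [hn] at this
      exact this
    have hnm : m ≤ n + 1 := by omega
    have hnN : N ≤ n + 1 := le_trans hmN hnm
    -- numerator bound
    have hball : μ (T.node (n+1) x) ≤ μ (Metric.closedBall x r) := by
      apply measure_mono
      exact (hcube (n+1)).trans (Metric.closedBall_subset_closedBall hup.le)
    have hv : 0 < (μ (Metric.closedBall x r)).toReal :=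
      ENNReal.toReal_pos (ball_meas_pos T hδ μ hxU hpos hr0) (measure_ne_top μ _)
    have hvm : mn (n+1) ≤ (μ (Metric.closedBall x r)).toReal := by
      rw [hmn (n+1)]
      exact ENNReal.toReal_mono (measure_ne_top μ _) hball
    have hnum : Real.log (1/(μ (Metric.closedBall x r)).toReal) ≤ Real.log (1/mn (n+1)) :=
      Real.log_le_log (one_div_pos.mpr hv) (one_div_le_one_div_of_le (hmpos (n+1)) hvm)
    -- denominator bounds
    have hden : Real.log (1/ℓ (n+1)) - C₀ ≤ Real.log (1/r) := by
      have h1 : Real.log (1/(Real.sqrt d * ℓ n)) ≤ Real.log (1/r) :=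
        Real.log_le_log (one_div_pos.mpr (mul_pos hsqd0 (hℓpos n))) (one_div_le_one_div_of_le hr0 hmin)
      have h2 : Real.log (1/(Real.sqrt d * ℓ n))
          = Real.log (1/ℓ n) - Real.log (Real.sqrt d) := by
        rw [one_div, one_div, Real.log_inv, Real.log_inv,
          Real.log_mul (ne_of_gt hsqd0) (ne_of_gt (hℓpos n))]
        ring
      have h4 : Real.log (1/ℓ (n+1)) ≤ Real.log (1/ℓ n) + Real.log (1/δ) := by
        have h5 : 1/ℓ (n+1) ≤ 1/(δ * ℓ n) :=
          one_div_le_one_div_of_le (mul_pos hδ (hℓpos n)) (hσ n)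
        calc Real.log (1/ℓ (n+1)) ≤ Real.log (1/(δ * ℓ n)) :=
              Real.log_le_log (one_div_pos.mpr (hℓpos (n+1))) h5
          _ = Real.log (1/ℓ n) + Real.log (1/δ) := by
              rw [one_div, one_div, one_div, Real.log_inv, Real.log_inv, Real.log_inv,
                Real.log_mul (ne_of_gt hδ) (ne_of_gt (hℓpos n))]
              ring
      rw [hC₀def]
      linarith
    have hsK' : K ≤ Real.log (1/ℓ (n+1)) := hm (n+1) hnm
    have hlogr_pos : 0 < Real.log (1/r) := by linarith
    have haL : Real.log (1/mn (n+1)) ≤ b * Real.log (1/ℓ (n+1)) := by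
      have hLn : Real.log (1/mn (n+1)) / Real.log (1/ℓ (n+1)) ≤ b := by
        rw [← hLf (n+1)]
        exact hN (n+1) hnN
      have hspos : 0 < Real.log (1/ℓ (n+1)) := by linarith
      rw [div_le_iff₀ hspos] at hLn
      exact hLn
    -- final chain
    have hfinal : Real.log (1/(μ (Metric.closedBall x r)).toReal) / Real.log (1/r) ≤ c := by
      have hcb : (0:ℝ) < c - b := by linarith
      have hfld : (c - b) * (c * C₀ / (c - b)) = c * C₀ := by field_simp
      have hbs : b * Real.log (1/ℓ (n+1)) ≤ c * (Real.log (1/ℓ (n+1)) - C₀) := by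
        nlinarith [mul_le_mul_of_nonneg_left hsK' hcb.le,
          mul_le_mul_of_nonneg_left hK1 hcb.le]
      rw [div_le_iff₀ hlogr_pos]
      have h1 : Real.log (1/(μ (Metric.closedBall x r)).toReal)
          ≤ b * Real.log (1/ℓ (n+1)) := le_trans hnum haL
      have h2 : c * (Real.log (1/ℓ (n+1)) - C₀) ≤ c * Real.log (1/r) :=
        mul_le_mul_of_nonneg_left hden hcpos.le
      linarith
    calc Real.log ((μ (Metric.closedBall x r)).toReal) / Real.log r
        = Real.log (1/(μ (Metric.closedBall x r)).toReal) / Real.log (1/r) := by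
          rw [one_div, one_div, Real.log_inv, Real.log_inv, neg_div_neg_eq]
      _ ≤ c := hfinal
  -- conclude
  apply Filter.limsup_le_of_le (by isBoundedDefault)
  filter_upwards [hqev] with r hr
  exact EReal.coe_le_coe_iff.mpr hr

set_option maxHeartbeats 1000000 in
/-- Direction 2: the tree limsup is at most the upper local (ball) dimension, at every point
of the unit cube where all tree cubes have positive measure and the Borel–Cantelli
conclusion holds. -/
lemma tree_le_localdim (T : CubeTree d δ) (hδ : 0 < δ)
    (μ : Measure (EuclideanSpace ℝ (Fin d))) [IsProbabilityMeasure μ]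
    {x : EuclideanSpace ℝ (Fin d)} (hxU : x ∈ unitCube d)
    (hpos : ∀ n, μ (T.node n x) ≠ 0)
    (hbc : ∀ k : ℕ, ∀ᶠ n in Filter.atTop,
      μ (big (T.corner n x, T.side n x))
        ≤ ENNReal.ofReal (Real.exp ((1/(k+1 : ℝ)) * n)) * μ (T.node n x)) :
    Filter.limsup (fun n : ℕ =>
      ((Real.log (1 / (μ (T.node n x)).toReal) / Real.log (1 / T.side n x) : ℝ) : EReal))
      Filter.atTop
    ≤ Filter.limsup
      (fun r : ℝ => ((Real.log ((μ (Metric.closedBall x r)).toReal) / Real.log r : ℝ) : EReal))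
      (nhdsWithin (0 : ℝ) (Set.Ioi 0)) := by
  classical
  set ℓ : ℕ → ℝ := fun n => T.side n x with hℓdef
  set mn : ℕ → ℝ := fun n => (μ (T.node n x)).toReal with hmndef
  set L : ℕ → ℝ := fun n => Real.log (1 / mn n) / Real.log (1 / ℓ n) with hLdef
  have hgoalfun : (fun n : ℕ =>
      ((Real.log (1 / (μ (T.node n x)).toReal) / Real.log (1 / T.side n x) : ℝ) : EReal))
      = (fun n : ℕ => ((L n : ℝ) : EReal)) := by
    funext n
    rw [hLdef, hmndef, hℓdef]
  rw [hgoalfun]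
  have hℓpos : ∀ n, 0 < ℓ n := fun n => T.side_pos n x hxU
  have hℓle1 : ∀ n, ℓ n ≤ 1 := fun n => side_le_one T hδ hxU n
  have hmpos : ∀ n, 0 < mn n := fun n => ENNReal.toReal_pos (hpos n) (measure_ne_top μ _)
  have hmn : ∀ n, mn n = (μ (T.node n x)).toReal := fun n => by rw [hmndef]
  have hLf : ∀ n, L n = Real.log (1 / mn n) / Real.log (1 / ℓ n) := fun n => by rw [hLdef]
  have hpow : ∀ n, ℓ n ≤ (1 - δ) ^ n := fun n => side_le_pow T hxU n
  have hδ1 : δ < 1 := lt_of_le_of_lt (delta_le_half T) (by norm_num)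
  have htend : Filter.Tendsto ℓ Filter.atTop (nhds 0) := by
    rw [hℓdef]
    exact side_tendsto_zero T hδ hxU
  have hballbig : ∀ n, μ (Metric.closedBall x (ℓ n)) ≤ μ (big (T.corner n x, T.side n x)) := by
    intro n
    apply measure_mono
    exact closedBall_subset_big (T.side_pos n x hxU) (T.mem_node n x hxU)
  have hballpos : ∀ n, 0 < (μ (Metric.closedBall x (ℓ n))).toReal :=
    fun n => ENNReal.toReal_pos (ball_meas_pos T hδ μ hxU hpos (hℓpos n)) (measure_ne_top μ _)
  clear_value ℓ mn L
  clear hgoalfun hℓdef hmndef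
  refine EReal.le_of_forall_lt_iff_le.mp (fun z hz => ?_)
  obtain ⟨b, hb1, hb2⟩ := EReal.exists_between_coe_real hz
  have hbz : b < z := by exact_mod_cast hb2
  have hbev : ∀ᶠ r in nhdsWithin (0:ℝ) (Set.Ioi 0),
      Real.log ((μ (Metric.closedBall x r)).toReal) / Real.log r < b := by
    filter_upwards [Filter.eventually_lt_of_limsup_lt hb1] with r hr
    exact EReal.coe_lt_coe_iff.mp hr
  -- constants
  set c₁ : ℝ := Real.log (1/(1-δ)) with hc₁def
  have hc₁ : 0 < c₁ := Real.log_pos (one_lt_one_div (by linarith) (by linarith))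
  have hsK : ∀ k : ℕ, (k : ℝ) * c₁ ≤ Real.log (1/ℓ k) := by
    intro k
    have h2 : (1:ℝ)/(1-δ)^k ≤ 1/ℓ k :=
      one_div_le_one_div_of_le (hℓpos k) (hpow k)
    calc (k : ℝ) * c₁ = Real.log ((1/(1-δ))^k) := by rw [Real.log_pow]
      _ = Real.log (1/(1-δ)^k) := by rw [div_pow, one_pow]
      _ ≤ Real.log (1/ℓ k) :=
          Real.log_le_log (one_div_pos.mpr (pow_pos (by linarith) k)) h2
  clear_value c₁
  -- pick ε = 1/(k+1) small
  obtain ⟨k, hk⟩ := exists_nat_one_div_lt (mul_pos (by linarith : (0:ℝ) < z - b) hc₁)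
  have hε : (0:ℝ) < 1/(k+1 : ℝ) := by positivity
  have hεsmall : (1/(k+1 : ℝ))/c₁ < z - b := by
    rw [div_lt_iff₀ hc₁]
    calc (1:ℝ)/(k+1) < (z-b) * c₁ := by exact_mod_cast hk
      _ = (z-b) * c₁ := rfl
  -- sequence of radii tends to 0 within (0,∞)
  have hseq : Filter.Tendsto ℓ Filter.atTop (nhdsWithin (0:ℝ) (Set.Ioi 0)) := by
    apply tendsto_nhdsWithin_of_tendsto_nhds_of_eventually_within _ htend
    exact Filter.Eventually.of_forall (fun n => hℓpos n)
  have hqn : ∀ᶠ n in Filter.atTop,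
      Real.log ((μ (Metric.closedBall x (ℓ n))).toReal) / Real.log (ℓ n) < b :=
    hseq.eventually hbev
  -- the eventual bound on L
  have hLev : ∀ᶠ n in Filter.atTop, L n ≤ b + (1/(k+1 : ℝ))/c₁ := by
    filter_upwards [hqn, hbc k, Filter.eventually_ge_atTop 1] with n hq hbig hn1
    -- measure comparison, in reals
    have hμle : μ (Metric.closedBall x (ℓ n))
        ≤ ENNReal.ofReal (Real.exp ((1/(k+1 : ℝ)) * n)) * μ (T.node n x) :=
      le_trans (hballbig n) hbig
    have hvr : (μ (Metric.closedBall x (ℓ n))).toReal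
        ≤ Real.exp ((1/(k+1 : ℝ)) * n) * mn n := by
      have h1 := ENNReal.toReal_mono ?_ hμle
      · rw [ENNReal.toReal_mul, ENNReal.toReal_ofReal (Real.exp_pos _).le] at h1
        rw [hmn n]
        exact h1
      · exact ENNReal.mul_ne_top ENNReal.ofReal_ne_top (measure_ne_top μ _)
    set v : ℝ := (μ (Metric.closedBall x (ℓ n))).toReal with hvdef
    have hv : 0 < v := hballpos n
    -- log inequality
    have hlog : Real.log (1/mn n) ≤ (1/(k+1 : ℝ)) * n + Real.log (1/v) := by
      have h1 : 1/mn n ≤ Real.exp ((1/(k+1 : ℝ)) * n) / v := by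
        rw [div_le_div_iff₀ (hmpos n) hv]
        nlinarith [hvr]
      have h2 : Real.log (Real.exp ((1/(k+1 : ℝ)) * n) / v)
          = (1/(k+1 : ℝ)) * n + Real.log (1/v) := by
        rw [Real.log_div (Real.exp_ne_zero _) (ne_of_gt hv), Real.log_exp, one_div v,
          Real.log_inv]
        ring
      calc Real.log (1/mn n) ≤ Real.log (Real.exp ((1/(k+1 : ℝ)) * n) / v) :=
            Real.log_le_log (one_div_pos.mpr (hmpos n)) h1
        _ = (1/(k+1 : ℝ)) * n + Real.log (1/v) := h2
    -- denominator positivity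
    have hn1' : (1:ℝ) ≤ (n:ℝ) := by exact_mod_cast hn1
    have hspos : 0 < Real.log (1/ℓ n) := by
      have := hsK n
      nlinarith
    -- the ball quotient in (1/·) form
    have hq2 : Real.log (1/v) / Real.log (1/ℓ n) < b := by
      rw [one_div v, one_div (ℓ n), Real.log_inv, Real.log_inv, neg_div_neg_eq]
      exact hq
    have hq3 : Real.log (1/v) < b * Real.log (1/ℓ n) := by
      rw [div_lt_iff₀ hspos] at hq2
      linarith
    -- εn ≤ (ε/c₁) · log(1/ℓ n)
    have hec : (0:ℝ) ≤ (1/(k+1 : ℝ))/c₁ := by positivity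
    have hid : (1/(k+1 : ℝ))/c₁ * c₁ = 1/(k+1 : ℝ) := div_mul_cancel₀ _ (ne_of_gt hc₁)
    have h3 : (1/(k+1 : ℝ)) * n ≤ ((1/(k+1 : ℝ))/c₁) * Real.log (1/ℓ n) := by
      nlinarith [mul_le_mul_of_nonneg_left (hsK n) hec]
    -- put together
    rw [hLf n, div_le_iff₀ hspos]
    have hexp : (b + (1/(k+1 : ℝ))/c₁) * Real.log (1/ℓ n)
        = b * Real.log (1/ℓ n) + ((1/(k+1 : ℝ))/c₁) * Real.log (1/ℓ n) := by ring
    linarith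
  -- conclude
  apply Filter.limsup_le_of_le (by isBoundedDefault)
  filter_upwards [hLev] with n hn
  calc ((L n : ℝ) : EReal) ≤ ((b + (1/(k+1 : ℝ))/c₁ : ℝ) : EReal) := EReal.coe_le_coe_iff.mpr hn
    _ ≤ (z : EReal) := EReal.coe_le_coe_iff.mpr (by linarith)

end CubeAux

/-- For a `δ`-regular tree of cubes `R*` with root `[0,1)^d` and a Borel
probability measure `μ` on `[0,1)^d`, the packing dimension of `μ` equals the `μ`-essential
supremum of `limsup_n log(1/μ(R_n(x))) / log(1/ℓ(R_n(x)))`. -/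
theorem packingDim_eq_essSup_tree_localDim (d : ℕ) (hd : 1 ≤ d) (δ : ℝ) (hδ : 0 < δ)
    (T : CubeTree d δ) (μ : Measure (EuclideanSpace ℝ (Fin d))) [IsProbabilityMeasure μ]
    (hsupp : μ (unitCube d) = 1) :
    packingDim μ = essSup (fun x =>
      Filter.limsup (fun n : ℕ =>
        ((Real.log (1 / (μ (T.node n x)).toReal) / Real.log (1 / T.side n x) : ℝ) : EReal))
        Filter.atTop) μ := by
  have hδ1 : δ < 1 := lt_of_le_of_lt (CubeAux.delta_le_half T) (by norm_num)
  -- a.e. facts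
  have hUc : μ (unitCube d)ᶜ = 0 := by
    have h := measure_compl (μ := μ) CubeAux.measurableSet_unitCube (measure_ne_top μ _)
    rw [hsupp, measure_univ] at h
    simpa using h
  have hU : ∀ᵐ x ∂μ, x ∈ unitCube d := by
    rw [MeasureTheory.ae_iff]
    exact hUc
  have hnull : μ (⋃ n : ℕ, ⋃ p ∈ {q ∈ CubeAux.levels T n | μ (cubeSet q.1 q.2) = 0},
      cubeSet p.1 p.2) = 0 := by
    apply measure_iUnion_null
    intro n
    rw [measure_biUnion_null_iff
      (((CubeAux.levels_finite T n).subset (Set.sep_subset _ _)).countable)]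
    intro p hp
    exact hp.2
  have hnmem := (MeasureTheory.measure_eq_zero_iff_ae_notMem (μ := μ)).mp hnull
  have hposae : ∀ᵐ x ∂μ, x ∈ unitCube d → ∀ n, μ (T.node n x) ≠ 0 := by
    filter_upwards [hnmem] with x hxS hxU n h0
    apply hxS
    refine Set.mem_iUnion.mpr ⟨n, ?_⟩
    refine Set.mem_iUnion₂.mpr ⟨(T.corner n x, T.side n x), ?_, T.mem_node n x hxU⟩
    exact ⟨CubeAux.mem_levels_self hxU n, h0⟩
  have hbcae : ∀ᵐ x ∂μ, ∀ k : ℕ, ∀ᶠ n in Filter.atTop, x ∈ unitCube d →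
      μ (CubeAux.big (T.corner n x, T.side n x))
        ≤ ENNReal.ofReal (Real.exp ((1/(k+1 : ℝ)) * n))
          * μ (cubeSet (T.corner n x) (T.side n x)) :=
    MeasureTheory.ae_all_iff.mpr
      (fun k => CubeAux.ae_eventually_big_small T hδ μ (ε := 1/(k+1 : ℝ)) (by positivity))
  have heq : (fun x => upperLocalDim μ x) =ᵐ[μ] (fun x =>
      Filter.limsup (fun n : ℕ =>
        ((Real.log (1 / (μ (T.node n x)).toReal) / Real.log (1 / T.side n x) : ℝ) : EReal))
        Filter.atTop) := by
    filter_upwards [hU, hposae, hbcae] with x hxU hpos hbc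
    simp only [upperLocalDim]
    apply le_antisymm
    · exact CubeAux.localdim_le_tree T hδ hd μ hxU (hpos hxU)
    · refine CubeAux.tree_le_localdim T hδ μ hxU (hpos hxU) (fun k => ?_)
      filter_upwards [hbc k] with n hn
      exact hn hxU
  exact essSup_congr_ae heq
end

section
/- Let δ > 0, let R* be a δ-regular tree of cubes with root [0,1)^d, and let μ be a Borel probability measure on [0,1)^d. Then for μ-almost every x, lim_{n→∞} (1/n)·( log(1/μ(R_n(x))) − Σ_{i=0}^{n-1} H(R_i(x)) ) = 0. -/
open MeasureTheory Filter Metric Set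
open scoped ENNReal NNReal

namespace TreeLLN

variable {d : ℕ} {δ : ℝ} (T : CubeTree d δ)

lemma measurableSet_cubeSet (a : EuclideanSpace ℝ (Fin d)) (l : ℝ) :
    MeasurableSet (cubeSet a l) := by
  have : cubeSet a l
      = ⋂ j : Fin d, (fun y : EuclideanSpace ℝ (Fin d) => y j) ⁻¹' Set.Ico (a j) (a j + l) := by
    ext y; simp [cubeSet, Set.mem_Ico, Set.mem_iInter]
  rw [this]
  exact MeasurableSet.iInter fun j =>
    ((EuclideanSpace.proj j).continuous.measurable) measurableSet_Ico

lemma volume_cubeSet (a : EuclideanSpace ℝ (Fin d)) {l : ℝ} (hl : 0 ≤ l) :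
    volume (cubeSet a l) = ENNReal.ofReal (l ^ d) := by
  have hmp := EuclideanSpace.volume_preserving_symm_measurableEquiv_toLp (Fin d)
  have : cubeSet a l = (MeasurableEquiv.toLp 2 (Fin d → ℝ)).symm ⁻¹'
        (Set.univ.pi fun j => Set.Ico (a j) (a j + l)) := by
    ext y; simp [cubeSet, Set.mem_Ico]
  rw [this, hmp.measure_preimage
    (MeasurableSet.univ_pi fun j => measurableSet_Ico).nullMeasurableSet, volume_pi_pi]
  simp [Real.volume_Ico, ← ENNReal.ofReal_pow hl]

lemma cubeSet_zero_one : cubeSet (0 : EuclideanSpace ℝ (Fin d)) 1 = unitCube d := by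
  ext y; simp [cubeSet, unitCube]

lemma measurableSet_unitCube : MeasurableSet (unitCube d) := by
  rw [← cubeSet_zero_one]; exact measurableSet_cubeSet _ _

lemma node_zero {x : EuclideanSpace ℝ (Fin d)} (hx : x ∈ unitCube d) :
    T.node 0 x = unitCube d := by
  rw [CubeTree.node, T.corner_zero x hx, T.side_zero x hx, cubeSet_zero_one]

lemma node_succ_subset {x : EuclideanSpace ℝ (Fin d)} (hx : x ∈ unitCube d) (n : ℕ) :
    T.node (n + 1) x ⊆ T.node n x := T.nested n x hx

lemma node_subset_unitCube {x : EuclideanSpace ℝ (Fin d)} (hx : x ∈ unitCube d) (n : ℕ) :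
    T.node n x ⊆ unitCube d := by
  induction n with
  | zero => rw [node_zero T hx]
  | succ n ih => exact (node_succ_subset T hx n).trans ih

lemma node_mono {x : EuclideanSpace ℝ (Fin d)} (hx : x ∈ unitCube d) {m n : ℕ} (h : m ≤ n) :
    T.node n x ⊆ T.node m x := by
  induction n with
  | zero => simp_all
  | succ n ih =>
    rcases Nat.eq_or_lt_of_le h with h' | h'
    · rw [h']
    · exact (node_succ_subset T hx n).trans (ih (Nat.lt_succ_iff.mp h'))

lemma mem_node_self {x : EuclideanSpace ℝ (Fin d)} (hx : x ∈ unitCube d) (n : ℕ) :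
    x ∈ T.node n x := T.mem_node n x hx

lemma mem_unitCube_of_mem_node {x y : EuclideanSpace ℝ (Fin d)} (hx : x ∈ unitCube d)
    {n : ℕ} (hy : y ∈ T.node n x) : y ∈ unitCube d := node_subset_unitCube T hx n hy

/-- If `y` lies in the level-`n` node of `x`, the nodes coincide. -/
lemma node_eq_of_mem {x y : EuclideanSpace ℝ (Fin d)} (hx : x ∈ unitCube d)
    {n : ℕ} (hy : y ∈ T.node n x) : T.node n y = T.node n x := by
  have hyU := mem_unitCube_of_mem_node T hx hy
  obtain ⟨h1, h2⟩ := T.compat n x hx y hyU hy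
  rw [CubeTree.node, h1, h2]; rfl

lemma children_eq_of_mem {x y : EuclideanSpace ℝ (Fin d)} (hx : x ∈ unitCube d)
    {n : ℕ} (hy : y ∈ T.node n x) : T.children n y = T.children n x := by
  unfold CubeTree.children
  rw [node_eq_of_mem T hx hy]

lemma treeEntropy_eq_of_mem (μ : Measure (EuclideanSpace ℝ (Fin d)))
    {x y : EuclideanSpace ℝ (Fin d)} (hx : x ∈ unitCube d)
    {n : ℕ} (hy : y ∈ T.node n x) : treeEntropy μ T n y = treeEntropy μ T n x := by
  unfold treeEntropy
  rw [node_eq_of_mem T hx hy, children_eq_of_mem T hx hy]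

/-- Two nodes at the same level either coincide or are disjoint. -/
lemma node_eq_or_disjoint {x y : EuclideanSpace ℝ (Fin d)} (hx : x ∈ unitCube d)
    (hy : y ∈ unitCube d) (n : ℕ) : T.node n x = T.node n y ∨ Disjoint (T.node n x) (T.node n y) := by
  by_cases h : Disjoint (T.node n x) (T.node n y)
  · exact Or.inr h
  · left
    obtain ⟨z, hzx, hzy⟩ := Set.not_disjoint_iff.mp h
    rw [← node_eq_of_mem T hx hzx, ← node_eq_of_mem T hy hzy]

end TreeLLN
namespace TreeLLN

variable {d : ℕ} {δ : ℝ} (T : CubeTree d δ)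

/-- The (corner, side) pairs appearing at level `n`. -/
def Lev (n : ℕ) : Set (EuclideanSpace ℝ (Fin d) × ℝ) :=
  {c | ∃ x ∈ unitCube d, c = (T.corner n x, T.side n x)}

lemma pair_mem_Lev {x : EuclideanSpace ℝ (Fin d)} (hx : x ∈ unitCube d) (n : ℕ) :
    (T.corner n x, T.side n x) ∈ Lev T n := ⟨x, hx, rfl⟩

lemma node_eq_cube_pair (n : ℕ) (x : EuclideanSpace ℝ (Fin d)) :
    cubeSet (T.corner n x, T.side n x).1 (T.corner n x, T.side n x).2 = T.node n x := rfl

lemma children_eq_finiteChildren_set {x : EuclideanSpace ℝ (Fin d)} (n : ℕ) :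
    T.children n x = {c : EuclideanSpace ℝ (Fin d) × ℝ |
      ∃ y ∈ unitCube d, y ∈ cubeSet (T.corner n x) (T.side n x) ∧
        c = (T.corner (n + 1) y, T.side (n + 1) y)} := rfl

lemma children_finite {x : EuclideanSpace ℝ (Fin d)} (hx : x ∈ unitCube d) (n : ℕ) :
    (T.children n x).Finite := by
  rw [children_eq_finiteChildren_set]
  exact T.finiteChildren n x hx

lemma children_subset_Lev {x : EuclideanSpace ℝ (Fin d)} (hx : x ∈ unitCube d) (n : ℕ) :
    T.children n x ⊆ Lev T (n + 1) := by
  rintro c ⟨y, hyU, _, rfl⟩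
  exact pair_mem_Lev T hyU (n + 1)

lemma Lev_finite (n : ℕ) : (Lev T (n : ℕ)).Finite := by
  induction n with
  | zero =>
    apply Set.Finite.subset (Set.finite_singleton ((0 : EuclideanSpace ℝ (Fin d)), (1 : ℝ)))
    rintro c ⟨x, hx, rfl⟩
    simp [T.corner_zero x hx, T.side_zero x hx]
  | succ n ih =>
    have hsub : Lev T (n + 1) ⊆ ⋃ c ∈ Lev T n, {e | ∃ y ∈ unitCube d,
        y ∈ cubeSet c.1 c.2 ∧ e = (T.corner (n + 1) y, T.side (n + 1) y)} := by
      rintro e ⟨y, hyU, rfl⟩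
      refine Set.mem_biUnion (pair_mem_Lev T hyU n) ?_
      exact ⟨y, hyU, T.mem_node n y hyU, rfl⟩
    apply Set.Finite.subset _ hsub
    apply Set.Finite.biUnion ih
    rintro c hc
    obtain ⟨x, hxU, rfl⟩ := hc
    exact T.finiteChildren n x hxU

/-- The level-`n` pairs as a Finset. -/
noncomputable def FnLev (n : ℕ) : Finset (EuclideanSpace ℝ (Fin d) × ℝ) :=
  (Lev_finite T n).toFinset

lemma mem_FnLev {c : EuclideanSpace ℝ (Fin d) × ℝ} {n : ℕ} :
    c ∈ FnLev T n ↔ ∃ x ∈ unitCube d, c = (T.corner n x, T.side n x) := by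
  simp [FnLev, Lev]

/-- Representative of a level-`n` pair. -/
lemma rep_spec {c : EuclideanSpace ℝ (Fin d) × ℝ} {n : ℕ} (hc : c ∈ FnLev T n) :
    ∃ x ∈ unitCube d, cubeSet c.1 c.2 = T.node n x := by
  obtain ⟨x, hx, rfl⟩ := (mem_FnLev T).mp hc
  exact ⟨x, hx, rfl⟩

lemma cube_subset_unitCube {c : EuclideanSpace ℝ (Fin d) × ℝ} {n : ℕ} (hc : c ∈ FnLev T n) :
    cubeSet c.1 c.2 ⊆ unitCube d := by
  obtain ⟨x, hx, h⟩ := rep_spec T hc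
  rw [h]; exact node_subset_unitCube T hx n

lemma FnLev_pairwiseDisjoint (n : ℕ) :
    Set.Pairwise (FnLev T n : Set (EuclideanSpace ℝ (Fin d) × ℝ))
      (Function.onFun Disjoint fun c => cubeSet c.1 c.2) := by
  intro c hc c' hc' hne
  simp only [Finset.mem_coe] at hc hc'
  obtain ⟨x, hx, hcx⟩ := (mem_FnLev T).mp hc
  obtain ⟨x', hx', hcx'⟩ := (mem_FnLev T).mp hc'
  rw [Function.onFun, Set.disjoint_left]
  intro z hz hz'
  subst hcx hcx'
  have hzx : z ∈ T.node n x := hz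
  have hzx' : z ∈ T.node n x' := hz'
  have hzU := mem_unitCube_of_mem_node T hx hzx
  obtain ⟨e1, e2⟩ := T.compat n x hx z hzU hzx
  obtain ⟨e1', e2'⟩ := T.compat n x' hx' z hzU hzx'
  exact hne (by rw [Prod.ext_iff]; constructor <;> simp [← e1, ← e2, e1', e2'])

lemma FnLev_cover (n : ℕ) :
    (⋃ c ∈ FnLev T n, cubeSet c.1 c.2) = unitCube d := by
  apply Set.Subset.antisymm
  · intro z hz
    simp only [Set.mem_iUnion] at hz
    obtain ⟨c, hc, hzc⟩ := hz
    exact cube_subset_unitCube T hc hzc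
  · intro x hx
    exact Set.mem_biUnion ((mem_FnLev T).mpr ⟨x, hx, rfl⟩)
      (show x ∈ cubeSet (T.corner n x, T.side n x).1 (T.corner n x, T.side n x).2 from
        T.mem_node n x hx)

end TreeLLN
namespace TreeLLN

variable {d : ℕ} {δ : ℝ} (T : CubeTree d δ)

/-- Children of the node of `x₀`, as a Finset. -/
noncomputable def chFinset {x₀ : EuclideanSpace ℝ (Fin d)} (hx₀ : x₀ ∈ unitCube d) (n : ℕ) :
    Finset (EuclideanSpace ℝ (Fin d) × ℝ) := (children_finite T hx₀ n).toFinset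

lemma mem_chFinset {x₀ : EuclideanSpace ℝ (Fin d)} (hx₀ : x₀ ∈ unitCube d) {n : ℕ}
    {c : EuclideanSpace ℝ (Fin d) × ℝ} :
    c ∈ chFinset T hx₀ n ↔ c ∈ T.children n x₀ := by simp [chFinset]

lemma child_rep {x₀ : EuclideanSpace ℝ (Fin d)} (hx₀ : x₀ ∈ unitCube d) {n : ℕ}
    {c : EuclideanSpace ℝ (Fin d) × ℝ} (hc : c ∈ chFinset T hx₀ n) :
    ∃ y ∈ unitCube d, y ∈ T.node n x₀ ∧ c = (T.corner (n+1) y, T.side (n+1) y) ∧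
      cubeSet c.1 c.2 = T.node (n + 1) y := by
  obtain ⟨y, hyU, hyn, rfl⟩ := (mem_chFinset T hx₀).mp hc
  exact ⟨y, hyU, hyn, rfl, rfl⟩

lemma chFinset_pairwiseDisjoint {x₀ : EuclideanSpace ℝ (Fin d)} (hx₀ : x₀ ∈ unitCube d) (n : ℕ) :
    Set.Pairwise (chFinset T hx₀ n : Set (EuclideanSpace ℝ (Fin d) × ℝ))
      (Function.onFun Disjoint fun c => cubeSet c.1 c.2) := by
  intro c hc c' hc' hne
  obtain ⟨y, hyU, _, hpair, hy⟩ := child_rep T hx₀ (Finset.mem_coe.mp hc)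
  obtain ⟨y', hyU', _, hpair', hy'⟩ := child_rep T hx₀ (Finset.mem_coe.mp hc')
  rw [Function.onFun, Set.disjoint_left]
  intro z hz hz'
  rw [hy] at hz; rw [hy'] at hz'
  have hzU := mem_unitCube_of_mem_node T hyU hz
  obtain ⟨e1, e2⟩ := T.compat (n+1) y hyU z hzU hz
  obtain ⟨e1', e2'⟩ := T.compat (n+1) y' hyU' z hzU hz'
  apply hne
  rw [hpair, hpair', ← e1, ← e2, ← e1', ← e2']

/-- The children cubes tile the parent node. -/
lemma chFinset_cover {x₀ : EuclideanSpace ℝ (Fin d)} (hx₀ : x₀ ∈ unitCube d) (n : ℕ) :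
    (⋃ c ∈ chFinset T hx₀ n, cubeSet c.1 c.2) = T.node n x₀ := by
  apply Set.Subset.antisymm
  · intro z hz
    simp only [Set.mem_iUnion] at hz
    obtain ⟨c, hc, hzc⟩ := hz
    obtain ⟨y, hyU, hyn, _, hy⟩ := child_rep T hx₀ hc
    rw [hy] at hzc
    have h1 : T.node (n+1) y ⊆ T.node n y := node_succ_subset T hyU n
    have h2 : T.node n y = T.node n x₀ := node_eq_of_mem T hx₀ hyn
    exact h2 ▸ h1 hzc
  · intro z hz
    have hzU := mem_unitCube_of_mem_node T hx₀ hz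
    have hmem : ((T.corner (n+1) z, T.side (n+1) z) : _ × ℝ) ∈ chFinset T hx₀ n :=
      (mem_chFinset T hx₀).mpr ⟨z, hzU, hz, rfl⟩
    exact Set.mem_biUnion hmem
      (show z ∈ cubeSet (T.corner (n+1) z, T.side (n+1) z).1 _ from T.mem_node (n+1) z hzU)

/-- Additivity of any measure over the children. -/
lemma measure_node_eq_sum (μ : Measure (EuclideanSpace ℝ (Fin d)))
    {x₀ : EuclideanSpace ℝ (Fin d)} (hx₀ : x₀ ∈ unitCube d) (n : ℕ) :
    μ (T.node n x₀) = ∑ c ∈ chFinset T hx₀ n, μ (cubeSet c.1 c.2) := by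
  rw [← chFinset_cover T hx₀ n]
  exact measure_biUnion_finset (chFinset_pairwiseDisjoint T hx₀ n)
    (fun c _ => measurableSet_cubeSet c.1 c.2)

/-- Additivity of any measure over a level. -/
lemma measure_unitCube_eq_sum (μ : Measure (EuclideanSpace ℝ (Fin d))) (n : ℕ) :
    μ (unitCube d) = ∑ c ∈ FnLev T n, μ (cubeSet c.1 c.2) := by
  rw [← FnLev_cover T n]
  exact measure_biUnion_finset (FnLev_pairwiseDisjoint T n)
    (fun c _ => measurableSet_cubeSet c.1 c.2)

end TreeLLN
namespace TreeLLN

variable {d : ℕ} {δ : ℝ} (T : CubeTree d δ)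

lemma side_eq_of_mem {x y : EuclideanSpace ℝ (Fin d)} (hx : x ∈ unitCube d)
    {n : ℕ} (hy : y ∈ T.node n x) : T.side n y = T.side n x :=
  (T.compat n x hx y (mem_unitCube_of_mem_node T hx hy) hy).2

lemma child_side_lb (hδ : 0 < δ) {x₀ : EuclideanSpace ℝ (Fin d)} (hx₀ : x₀ ∈ unitCube d)
    {n : ℕ} {c : EuclideanSpace ℝ (Fin d) × ℝ} (hc : c ∈ chFinset T hx₀ n) :
    δ * T.side n x₀ ≤ c.2 := by
  obtain ⟨y, hyU, hyn, hpair, _⟩ := child_rep T hx₀ hc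
  have hside : T.side n y = T.side n x₀ := side_eq_of_mem T hx₀ hyn
  have hpos : 0 < T.side n y := T.side_pos n y hyU
  have hreg := (T.regular n y hyU).1
  have : δ * T.side n y ≤ T.side (n+1) y := by
    have := (le_div_iff₀ hpos).mp hreg
    linarith
  rw [hside] at this
  calc δ * T.side n x₀ ≤ T.side (n+1) y := this
    _ = c.2 := by rw [hpair]

lemma child_side_pos {x₀ : EuclideanSpace ℝ (Fin d)} (hx₀ : x₀ ∈ unitCube d)
    {n : ℕ} {c : EuclideanSpace ℝ (Fin d) × ℝ} (hc : c ∈ chFinset T hx₀ n) :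
    0 < c.2 := by
  obtain ⟨y, hyU, _, hpair, _⟩ := child_rep T hx₀ hc
  rw [hpair]
  exact T.side_pos (n+1) y hyU

/-- Uniform bound for the number of children. -/
lemma card_children_le (hδ : 0 < δ) {x₀ : EuclideanSpace ℝ (Fin d)} (hx₀ : x₀ ∈ unitCube d)
    (n : ℕ) : ((chFinset T hx₀ n).card : ℝ) ≤ δ⁻¹ ^ d := by
  set ℓ := T.side n x₀ with hℓ
  have hℓpos : 0 < ℓ := T.side_pos n x₀ hx₀
  -- volume identity
  have hvol := measure_node_eq_sum T volume hx₀ n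
  rw [CubeTree.node, volume_cubeSet _ hℓpos.le] at hvol
  have hvol' : ∀ c ∈ chFinset T hx₀ n, volume (cubeSet c.1 c.2) = ENNReal.ofReal (c.2 ^ d) :=
    fun c hc => volume_cubeSet c.1 (child_side_pos T hx₀ hc).le
  rw [Finset.sum_congr rfl hvol'] at hvol
  have hsum : ENNReal.ofReal (∑ c ∈ chFinset T hx₀ n, c.2 ^ d) = ENNReal.ofReal (ℓ ^ d) := by
    rw [ENNReal.ofReal_sum_of_nonneg (fun c hc => pow_nonneg (child_side_pos T hx₀ hc).le d)]
    exact hvol.symm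
  have hreal : ∑ c ∈ chFinset T hx₀ n, c.2 ^ d = ℓ ^ d := by
    have h1 : 0 ≤ ∑ c ∈ chFinset T hx₀ n, c.2 ^ d :=
      Finset.sum_nonneg fun c hc => pow_nonneg (child_side_pos T hx₀ hc).le d
    have h2 : 0 ≤ ℓ ^ d := pow_nonneg hℓpos.le d
    rwa [ENNReal.ofReal_eq_ofReal_iff h1 h2] at hsum
  have hlb : ((chFinset T hx₀ n).card : ℝ) * (δ * ℓ) ^ d ≤ ℓ ^ d := by
    rw [← hreal]
    have := Finset.card_nsmul_le_sum (chFinset T hx₀ n) (fun c => c.2 ^ d) ((δ * ℓ) ^ d)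
      (fun c hc => pow_le_pow_left₀ (by positivity) (child_side_lb T hδ hx₀ hc) d)
    simpa [nsmul_eq_mul] using this
  have hpow : 0 < (δ * ℓ) ^ d := by positivity
  rw [← le_div_iff₀ hpow] at hlb
  calc ((chFinset T hx₀ n).card : ℝ) ≤ ℓ ^ d / (δ * ℓ) ^ d := hlb
    _ = δ⁻¹ ^ d := by
        rw [mul_pow, eq_comm, eq_div_iff (by positivity)]
        field_simp
        rw [one_div, inv_pow, inv_mul_cancel₀ (by positivity)]
end TreeLLN
namespace TreeLLN

variable {d : ℕ} {δ : ℝ} (T : CubeTree d δ)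

/-- The increment function (before restriction to the unit cube). -/
noncomputable def Df (μ : Measure (EuclideanSpace ℝ (Fin d))) (n : ℕ)
    (x : EuclideanSpace ℝ (Fin d)) : ℝ :=
  Real.log (μ (T.node n x)).toReal - Real.log (μ (T.node (n+1) x)).toReal - treeEntropy μ T n x

/-- The martingale-difference function. -/
noncomputable def Dm (μ : Measure (EuclideanSpace ℝ (Fin d))) (n : ℕ) :
    EuclideanSpace ℝ (Fin d) → ℝ :=
  (unitCube d).indicator (Df T μ n)

/-- The partial-sum process. -/
noncomputable def Sm (μ : Measure (EuclideanSpace ℝ (Fin d))) (n : ℕ) :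
    EuclideanSpace ℝ (Fin d) → ℝ :=
  fun x => ∑ i ∈ Finset.range n, Dm T μ i x

/-- A function that vanishes off the unit cube and is constant on each level-`n` node. -/
def Lsimple (n : ℕ) (f : EuclideanSpace ℝ (Fin d) → ℝ) : Prop :=
  (∀ x ∉ unitCube d, f x = 0) ∧
    ∀ x ∈ unitCube d, ∀ y ∈ T.node n x, f y = f x

lemma Lsimple.mono {n m : ℕ} (h : n ≤ m) {f : EuclideanSpace ℝ (Fin d) → ℝ}
    (hf : Lsimple T n f) : Lsimple T m f := by
  refine ⟨hf.1, fun x hx y hy => hf.2 x hx y (node_mono T hx h hy)⟩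

lemma Lsimple.add {n : ℕ} {f g : EuclideanSpace ℝ (Fin d) → ℝ}
    (hf : Lsimple T n f) (hg : Lsimple T n g) : Lsimple T n (f + g) := by
  refine ⟨fun x hx => by simp [hf.1 x hx, hg.1 x hx],
    fun x hx y hy => by simp [Pi.add_apply, hf.2 x hx y hy, hg.2 x hx y hy]⟩

lemma Lsimple.mul {n : ℕ} {f g : EuclideanSpace ℝ (Fin d) → ℝ}
    (hf : Lsimple T n f) (hg : Lsimple T n g) : Lsimple T n (f * g) := by
  refine ⟨fun x hx => by simp [Pi.mul_apply, hf.1 x hx],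
    fun x hx y hy => by simp [Pi.mul_apply, hf.2 x hx y hy, hg.2 x hx y hy]⟩

lemma Lsimple.pow {n : ℕ} {f : EuclideanSpace ℝ (Fin d) → ℝ} (hf : Lsimple T n f)
    {k : ℕ} (hk : k ≠ 0) : Lsimple T n (f ^ k) := by
  refine ⟨fun x hx => by simp [Pi.pow_apply, hf.1 x hx, zero_pow hk],
    fun x hx y hy => by simp [Pi.pow_apply, hf.2 x hx y hy]⟩

lemma Lsimple.abs {n : ℕ} {f : EuclideanSpace ℝ (Fin d) → ℝ} (hf : Lsimple T n f) :
    Lsimple T n (fun x => |f x|) := by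
  refine ⟨fun x hx => by simp [hf.1 x hx], fun x hx y hy => by simp [hf.2 x hx y hy]⟩

lemma Lsimple_zero (n : ℕ) : Lsimple T n (fun _ => (0:ℝ)) := ⟨fun _ _ => rfl, fun _ _ _ _ => rfl⟩

lemma measure_node_eq_of_mem (μ : Measure (EuclideanSpace ℝ (Fin d)))
    {x y : EuclideanSpace ℝ (Fin d)} (hx : x ∈ unitCube d) {n : ℕ} (hy : y ∈ T.node n x) :
    μ (T.node n y) = μ (T.node n x) := by rw [node_eq_of_mem T hx hy]

lemma Lsimple_Dm (μ : Measure (EuclideanSpace ℝ (Fin d))) (n : ℕ) :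
    Lsimple T (n + 1) (Dm T μ n) := by
  constructor
  · intro x hx; exact Set.indicator_of_notMem hx _
  · intro x hx y hy
    have hyU := mem_unitCube_of_mem_node T hx hy
    rw [Dm, Set.indicator_of_mem hyU, Set.indicator_of_mem hx]
    have h1 : T.node (n+1) y = T.node (n+1) x := node_eq_of_mem T hx hy
    have hy' : y ∈ T.node n x := node_succ_subset T hx n hy
    have h0 : T.node n y = T.node n x := node_eq_of_mem T hx hy'
    unfold Df
    rw [h1, h0, treeEntropy_eq_of_mem T μ hx hy']

lemma Lsimple_Sm (μ : Measure (EuclideanSpace ℝ (Fin d))) (n : ℕ) :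
    Lsimple T n (Sm T μ n) := by
  have : Sm T μ n = fun x => ∑ i ∈ Finset.range n, Dm T μ i x := rfl
  constructor
  · intro x hx
    simp only [Sm]
    exact Finset.sum_eq_zero fun i _ => (Lsimple_Dm T μ i).1 x hx
  · intro x hx y hy
    simp only [Sm]
    refine Finset.sum_congr rfl fun i hi => ?_
    have : Lsimple T n (Dm T μ i) :=
      (Lsimple_Dm T μ i).mono T (Nat.succ_le_of_lt (Finset.mem_range.mp hi))
    exact this.2 x hx y hy

/-- Lsimple functions are the finite sum of their cube restrictions. -/
lemma Lsimple.repr {n : ℕ} {f : EuclideanSpace ℝ (Fin d) → ℝ} (hf : Lsimple T n f)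
    (x : EuclideanSpace ℝ (Fin d)) :
    f x = ∑ c ∈ FnLev T n, (cubeSet c.1 c.2).indicator f x := by
  by_cases hx : x ∈ unitCube d
  · have hx' : x ∈ ⋃ c ∈ FnLev T n, cubeSet c.1 c.2 := by rw [FnLev_cover]; exact hx
    simp only [Set.mem_iUnion] at hx'
    obtain ⟨c₀, hc₀, hxc₀⟩ := hx'
    rw [Finset.sum_eq_single_of_mem c₀ hc₀]
    · rw [Set.indicator_of_mem hxc₀]
    · intro c hc hne
      apply Set.indicator_of_notMem
      intro hxc
      have := FnLev_pairwiseDisjoint T n (Finset.mem_coe.mpr hc) (Finset.mem_coe.mpr hc₀) hne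
      exact Set.disjoint_left.mp this hxc hxc₀
  · rw [hf.1 x hx]
    symm
    exact Finset.sum_eq_zero fun c hc => Set.indicator_of_notMem
      (fun hxc => hx (cube_subset_unitCube T hc hxc)) f

/-- On each level cube, an Lsimple function is constant. -/
lemma Lsimple.const_on {n : ℕ} {f : EuclideanSpace ℝ (Fin d) → ℝ} (hf : Lsimple T n f)
    {c : EuclideanSpace ℝ (Fin d) × ℝ} (hc : c ∈ FnLev T n) :
    ∃ v : ℝ, ∀ y ∈ cubeSet c.1 c.2, f y = v := by
  obtain ⟨x, hx, hcube⟩ := rep_spec T hc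
  exact ⟨f x, fun y hy => hf.2 x hx y (hcube ▸ hy)⟩

lemma Lsimple.measurable {n : ℕ} {f : EuclideanSpace ℝ (Fin d) → ℝ} (hf : Lsimple T n f) :
    Measurable f := by
  have : f = fun x => ∑ c ∈ FnLev T n, (cubeSet c.1 c.2).indicator f x := funext (hf.repr T)
  rw [this]
  apply Finset.measurable_sum
  intro c hc
  obtain ⟨v, hv⟩ := hf.const_on T hc
  have : (cubeSet c.1 c.2).indicator f = (cubeSet c.1 c.2).indicator (fun _ => v) := by
    funext y
    by_cases hy : y ∈ cubeSet c.1 c.2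
    · rw [Set.indicator_of_mem hy, Set.indicator_of_mem hy, hv y hy]
    · rw [Set.indicator_of_notMem hy, Set.indicator_of_notMem hy]
  rw [this]
  exact (measurable_const).indicator (measurableSet_cubeSet c.1 c.2)

lemma Lsimple.integrable {n : ℕ} {f : EuclideanSpace ℝ (Fin d) → ℝ} (hf : Lsimple T n f)
    (μ : Measure (EuclideanSpace ℝ (Fin d))) [IsFiniteMeasure μ] :
    Integrable f μ := by
  have : f = fun x => ∑ c ∈ FnLev T n, (cubeSet c.1 c.2).indicator f x := funext (hf.repr T)
  rw [this]
  apply integrable_finset_sum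
  intro c hc
  obtain ⟨v, hv⟩ := hf.const_on T hc
  have : (cubeSet c.1 c.2).indicator f = (cubeSet c.1 c.2).indicator (fun _ => v) := by
    funext y
    by_cases hy : y ∈ cubeSet c.1 c.2
    · rw [Set.indicator_of_mem hy, Set.indicator_of_mem hy, hv y hy]
    · rw [Set.indicator_of_notMem hy, Set.indicator_of_notMem hy]
  rw [this]
  exact (integrable_const v).indicator (measurableSet_cubeSet c.1 c.2)

end TreeLLN
namespace TreeLLN

lemma negMulLog_le_one {x : ℝ} (hx : 0 ≤ x) : Real.negMulLog x ≤ 1 := by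
  rcases eq_or_lt_of_le hx with h | h
  · simp [← h, Real.negMulLog]
  · have h1 : Real.log x⁻¹ ≤ x⁻¹ - 1 := Real.log_le_sub_one_of_pos (by positivity)
    have : Real.negMulLog x = x * Real.log x⁻¹ := by
      rw [Real.negMulLog, Real.log_inv]; ring
    rw [this]
    calc x * Real.log x⁻¹ ≤ x * (x⁻¹ - 1) := by
          exact mul_le_mul_of_nonneg_left h1 hx
      _ = 1 - x := by field_simp
      _ ≤ 1 := by linarith

lemma plog_pow_le {p q : ℝ} (hp : 0 < p) (hpq : p ≤ q) (k : ℕ) (hk : 1 ≤ k) :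
    p * (Real.log (q / p)) ^ k ≤ q * (k : ℝ) ^ k := by
  have hq : 0 < q := lt_of_lt_of_le hp hpq
  set t : ℝ := q / p with ht
  have ht1 : 1 ≤ t := (one_le_div hp).mpr hpq
  have ht0 : 0 < t := lt_of_lt_of_le one_pos ht1
  have hkpos : (0:ℝ) < k := by exact_mod_cast hk
  set s : ℝ := t ^ ((1:ℝ) / k) with hs
  have hs1 : 1 ≤ s := Real.one_le_rpow ht1 (by positivity)
  have hs0 : 0 < s := lt_of_lt_of_le one_pos hs1
  have hlogs : Real.log s = (1 / k) * Real.log t := Real.log_rpow ht0 _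
  have hlog_t : Real.log t = k * Real.log s := by
    rw [hlogs]; field_simp
  have hlogs_le : Real.log s ≤ s := (Real.log_le_sub_one_of_pos hs0).trans (by linarith)
  have hsk : s ^ k = t := by
    rw [hs, ← Real.rpow_natCast (t ^ ((1:ℝ)/k)) k, ← Real.rpow_mul ht0.le]
    rw [one_div, inv_mul_cancel₀ (by positivity), Real.rpow_one]
  have hlog_nonneg : 0 ≤ Real.log t := Real.log_nonneg ht1
  have h1 : (Real.log t) ^ k ≤ (k:ℝ) ^ k * t := by
    calc (Real.log t) ^ k = (k * Real.log s) ^ k := by rw [hlog_t]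
      _ = (k:ℝ) ^ k * (Real.log s) ^ k := by rw [mul_pow]
      _ ≤ (k:ℝ) ^ k * s ^ k := by
          apply mul_le_mul_of_nonneg_left _ (by positivity)
          exact pow_le_pow_left₀ (by
            nlinarith [hlog_t, hlog_nonneg, hkpos]) hlogs_le k
      _ = (k:ℝ) ^ k * t := by rw [hsk]
  calc p * (Real.log t) ^ k ≤ p * ((k:ℝ)^k * t) := mul_le_mul_of_nonneg_left h1 hp.le
    _ = q * (k:ℝ) ^ k := by rw [ht]; field_simp

variable {ι : Type*}

lemma alg_zero (G : Finset ι) (p : ι → ℝ) (q H : ℝ)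
    (hp : ∀ c ∈ G, 0 ≤ p c) (hq : ∑ c ∈ G, p c = q)
    (hH : H = ∑ c ∈ G, Real.negMulLog (p c / q)) :
    ∑ c ∈ G, (Real.log q - Real.log (p c) - H) * p c = 0 := by
  have hq0 : 0 ≤ q := hq ▸ Finset.sum_nonneg hp
  have key : ∀ c ∈ G, (Real.log q - Real.log (p c)) * p c = q * Real.negMulLog (p c / q) := by
    intro c hc
    rcases eq_or_lt_of_le (hp c hc) with h | h
    · simp [← h, Real.negMulLog]
    · have hqpos : 0 < q := lt_of_lt_of_le h (hq ▸ Finset.single_le_sum hp hc)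
      rw [Real.negMulLog, Real.log_div (ne_of_gt h) (ne_of_gt hqpos)]
      field_simp
      ring
  have : ∑ c ∈ G, (Real.log q - Real.log (p c) - H) * p c
      = ∑ c ∈ G, ((Real.log q - Real.log (p c)) * p c) - H * ∑ c ∈ G, p c := by
    rw [Finset.mul_sum, ← Finset.sum_sub_distrib]
    exact Finset.sum_congr rfl fun c hc => by ring
  rw [this, Finset.sum_congr rfl key, ← Finset.mul_sum, ← hH, hq]
  ring

lemma alg_mom (G : Finset ι) (p : ι → ℝ) (q H M : ℝ) (k : ℕ) (hk : 1 ≤ k)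
    (hp : ∀ c ∈ G, 0 ≤ p c) (hpq : ∀ c ∈ G, p c ≤ q) (hq : ∑ c ∈ G, p c = q)
    (hH : H = ∑ c ∈ G, Real.negMulLog (p c / q))
    (hM : (G.card : ℝ) ≤ M) (hM1 : 1 ≤ M) :
    ∑ c ∈ G, |Real.log q - Real.log (p c) - H| ^ k * p c
      ≤ 2 ^ k * (M * (k:ℝ) ^ k + M ^ k) * q := by
  have hq0 : 0 ≤ q := hq ▸ Finset.sum_nonneg hp
  have hr01 : ∀ c ∈ G, 0 ≤ p c / q ∧ p c / q ≤ 1 := by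
    intro c hc
    rcases eq_or_lt_of_le hq0 with h | h
    · have : p c = 0 := le_antisymm (by rw [← h] at hpq; exact hpq c hc) (hp c hc)
      simp [this]
    · exact ⟨div_nonneg (hp c hc) hq0, (div_le_one h).mpr (hpq c hc)⟩
  have hH0 : 0 ≤ H := by
    rw [hH]
    exact Finset.sum_nonneg fun c hc =>
      Real.negMulLog_nonneg (hr01 c hc).1 (hr01 c hc).2
  have hHM : H ≤ M := by
    rw [hH]
    calc ∑ c ∈ G, Real.negMulLog (p c / q) ≤ ∑ c ∈ G, 1 :=
          Finset.sum_le_sum fun c hc => negMulLog_le_one (hr01 c hc).1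
      _ = G.card := by simp
      _ ≤ M := hM
  have key : ∀ c ∈ G, |Real.log q - Real.log (p c) - H| ^ k * p c
      ≤ 2 ^ k * ((k:ℝ) ^ k * q + H ^ k * p c) := by
    intro c hc
    rcases eq_or_lt_of_le (hp c hc) with h | h
    · rw [← h]
      simp
      positivity
    · have hqpos : 0 < q := lt_of_lt_of_le h (hpq c hc)
      set a : ℝ := Real.log q - Real.log (p c) with ha
      have ha' : a = Real.log (q / p c) := by
        rw [ha, Real.log_div (ne_of_gt hqpos) (ne_of_gt h)]
      have ha0 : 0 ≤ a := by
        rw [ha]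
        have := Real.log_le_log h (hpq c hc)
        linarith
      have habs : |a - H| ≤ a + H := by
        rw [abs_sub_le_iff]; constructor <;> linarith
      have h1 : |a - H| ^ k ≤ (a + H) ^ k :=
        pow_le_pow_left₀ (abs_nonneg _) habs k
      have h2 : (a + H) ^ k ≤ 2 ^ k * (a ^ k + H ^ k) := by
        calc (a + H) ^ k ≤ (2 * max a H) ^ k := by
              apply pow_le_pow_left₀ (by positivity)
              rcases le_total a H with h' | h'
              · rw [max_eq_right h']; linarith
              · rw [max_eq_left h']; linarith
          _ = 2 ^ k * (max a H) ^ k := by rw [mul_pow]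
          _ ≤ 2 ^ k * (a ^ k + H ^ k) := by
              apply mul_le_mul_of_nonneg_left _ (by positivity)
              rcases le_total a H with h' | h'
              · rw [max_eq_right h']
                nlinarith [pow_nonneg ha0 k]
              · rw [max_eq_left h']
                nlinarith [pow_nonneg hH0 k]
      have h3 : a ^ k * p c ≤ q * (k:ℝ) ^ k := by
        rw [ha', mul_comm]
        exact plog_pow_le h (hpq c hc) k hk
      calc |a - H| ^ k * p c ≤ (2 ^ k * (a ^ k + H ^ k)) * p c := by
            apply mul_le_mul_of_nonneg_right _ (hp c hc)
            exact h1.trans h2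
        _ = 2 ^ k * (a ^ k * p c + H ^ k * p c) := by ring
        _ ≤ 2 ^ k * ((k:ℝ) ^ k * q + H ^ k * p c) := by
            apply mul_le_mul_of_nonneg_left _ (by positivity)
            have := h3
            linarith [h3]
  calc ∑ c ∈ G, |Real.log q - Real.log (p c) - H| ^ k * p c
      ≤ ∑ c ∈ G, 2 ^ k * ((k:ℝ) ^ k * q + H ^ k * p c) := Finset.sum_le_sum key
    _ = 2 ^ k * ((k:ℝ) ^ k * q * G.card + H ^ k * q) := by
        rw [← Finset.mul_sum, Finset.sum_add_distrib, Finset.sum_const, ← Finset.mul_sum, hq]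
        simp [nsmul_eq_mul]
        ring
    _ ≤ 2 ^ k * (M * (k:ℝ) ^ k + M ^ k) * q := by
        have hHk : H ^ k ≤ M ^ k := pow_le_pow_left₀ hH0 hHM k
        have hk0 : (0:ℝ) ≤ (k:ℝ) ^ k := by positivity
        have h2k : (0:ℝ) ≤ 2 ^ k := by positivity
        have hcardq : (k:ℝ) ^ k * q * G.card ≤ M * (k:ℝ) ^ k * q := by
          rcases eq_or_lt_of_le hq0 with h | h
          · rw [← h]; simp
          · calc (k:ℝ) ^ k * q * G.card ≤ (k:ℝ) ^ k * q * M := by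
                  exact mul_le_mul_of_nonneg_left hM (by positivity)
              _ = M * (k:ℝ) ^ k * q := by ring
        have hHq : H ^ k * q ≤ M ^ k * q := mul_le_mul_of_nonneg_right hHk hq0
        calc 2 ^ k * ((k:ℝ) ^ k * q * G.card + H ^ k * q)
            ≤ 2 ^ k * (M * (k:ℝ) ^ k * q + M ^ k * q) := by
              apply mul_le_mul_of_nonneg_left _ h2k
              linarith
          _ = 2 ^ k * (M * (k:ℝ) ^ k + M ^ k) * q := by ring
  
end TreeLLN
namespace TreeLLN

variable {d : ℕ} {δ : ℝ} (T : CubeTree d δ)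
variable (μ : Measure (EuclideanSpace ℝ (Fin d))) [IsProbabilityMeasure μ]

/-- The moment constant. -/
noncomputable def Kc (d : ℕ) (δ : ℝ) (k : ℕ) : ℝ := 2 ^ k * (δ⁻¹ ^ d * (k:ℝ) ^ k + (δ⁻¹ ^ d) ^ k)

lemma Dm_const_on_child {x₀ : EuclideanSpace ℝ (Fin d)} (hx₀ : x₀ ∈ unitCube d) {n : ℕ}
    {c' : EuclideanSpace ℝ (Fin d) × ℝ} (hc' : c' ∈ chFinset T hx₀ n) :
    ∀ z ∈ cubeSet c'.1 c'.2, Dm T μ n z =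
      Real.log (μ (T.node n x₀)).toReal - Real.log (μ (cubeSet c'.1 c'.2)).toReal
        - treeEntropy μ T n x₀ := by
  intro z hz
  obtain ⟨y, hyU, hyn, _, hcube⟩ := child_rep T hx₀ hc'
  rw [hcube] at hz
  have hzU : z ∈ unitCube d := mem_unitCube_of_mem_node T hyU hz
  have h1 : T.node (n+1) z = T.node (n+1) y := node_eq_of_mem T hyU hz
  have hzy : z ∈ T.node n y := node_succ_subset T hyU n hz
  have hny : T.node n y = T.node n x₀ := node_eq_of_mem T hx₀ hyn
  have hzx₀ : z ∈ T.node n x₀ := hny ▸ hzy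
  have h0 : T.node n z = T.node n x₀ := node_eq_of_mem T hx₀ hzx₀
  rw [Dm, Set.indicator_of_mem hzU, Df, h1, h0, hcube,
    treeEntropy_eq_of_mem T μ hx₀ hzx₀]

lemma entropy_formula {x₀ : EuclideanSpace ℝ (Fin d)} (hx₀ : x₀ ∈ unitCube d) (n : ℕ) :
    treeEntropy μ T n x₀ = ∑ c' ∈ chFinset T hx₀ n,
      Real.negMulLog ((μ (cubeSet c'.1 c'.2)).toReal / (μ (T.node n x₀)).toReal) := by
  rw [treeEntropy, finsum_mem_eq_finite_toFinset_sum _ (children_finite T hx₀ n)]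
  rfl

lemma q_eq_sum {x₀ : EuclideanSpace ℝ (Fin d)} (hx₀ : x₀ ∈ unitCube d) (n : ℕ) :
    (μ (T.node n x₀)).toReal = ∑ c' ∈ chFinset T hx₀ n, (μ (cubeSet c'.1 c'.2)).toReal := by
  rw [measure_node_eq_sum T μ hx₀ n, ENNReal.toReal_sum fun c _ => measure_ne_top μ _]

lemma child_subset_node {x₀ : EuclideanSpace ℝ (Fin d)} (hx₀ : x₀ ∈ unitCube d) {n : ℕ}
    {c' : EuclideanSpace ℝ (Fin d) × ℝ} (hc' : c' ∈ chFinset T hx₀ n) :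
    cubeSet c'.1 c'.2 ⊆ T.node n x₀ := by
  rw [← chFinset_cover T hx₀ n]
  intro z hz
  exact Set.mem_biUnion hc' hz

lemma setIntegral_node_eq_sum {x₀ : EuclideanSpace ℝ (Fin d)} (hx₀ : x₀ ∈ unitCube d) (n : ℕ)
    {f : EuclideanSpace ℝ (Fin d) → ℝ} (hf : Integrable f μ) :
    ∫ x in T.node n x₀, f x ∂μ
      = ∑ c' ∈ chFinset T hx₀ n, ∫ x in cubeSet c'.1 c'.2, f x ∂μ := by
  rw [← chFinset_cover T hx₀ n]
  exact integral_biUnion_finset _ (fun c _ => measurableSet_cubeSet c.1 c.2)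
    (chFinset_pairwiseDisjoint T hx₀ n) (fun c _ => hf.integrableOn)

lemma setIntegral_pow_Dm_child {x₀ : EuclideanSpace ℝ (Fin d)} (hx₀ : x₀ ∈ unitCube d) {n : ℕ}
    {c' : EuclideanSpace ℝ (Fin d) × ℝ} (hc' : c' ∈ chFinset T hx₀ n) (k : ℕ) :
    ∫ z in cubeSet c'.1 c'.2, |Dm T μ n z| ^ k ∂μ
      = |Real.log (μ (T.node n x₀)).toReal - Real.log (μ (cubeSet c'.1 c'.2)).toReal
          - treeEntropy μ T n x₀| ^ k * (μ (cubeSet c'.1 c'.2)).toReal := by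
  rw [setIntegral_congr_fun (measurableSet_cubeSet c'.1 c'.2)
    (g := fun _ => |Real.log (μ (T.node n x₀)).toReal - Real.log (μ (cubeSet c'.1 c'.2)).toReal
          - treeEntropy μ T n x₀| ^ k)
    (fun z hz => by rw [Dm_const_on_child T μ hx₀ hc' z hz]), setIntegral_const, smul_eq_mul, measureReal_def]
  ring

lemma setIntegral_Dm_child {x₀ : EuclideanSpace ℝ (Fin d)} (hx₀ : x₀ ∈ unitCube d) {n : ℕ}
    {c' : EuclideanSpace ℝ (Fin d) × ℝ} (hc' : c' ∈ chFinset T hx₀ n) :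
    ∫ z in cubeSet c'.1 c'.2, Dm T μ n z ∂μ
      = (Real.log (μ (T.node n x₀)).toReal - Real.log (μ (cubeSet c'.1 c'.2)).toReal
          - treeEntropy μ T n x₀) * (μ (cubeSet c'.1 c'.2)).toReal := by
  rw [setIntegral_congr_fun (measurableSet_cubeSet c'.1 c'.2)
    (g := fun _ => Real.log (μ (T.node n x₀)).toReal - Real.log (μ (cubeSet c'.1 c'.2)).toReal
          - treeEntropy μ T n x₀)
    (fun z hz => by rw [Dm_const_on_child T μ hx₀ hc' z hz]), setIntegral_const, smul_eq_mul, measureReal_def]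
  ring

lemma Dm_integrable (n : ℕ) : Integrable (Dm T μ n) μ :=
  (Lsimple_Dm T μ n).integrable T μ

lemma abs_pow_Dm_integrable (n k : ℕ) (hk : k ≠ 0) :
    Integrable (fun x => |Dm T μ n x| ^ k) μ := by
  have h : Lsimple T (n+1) ((fun x => |Dm T μ n x|) ^ k) :=
    ((Lsimple_Dm T μ n).abs T).pow T hk
  have := h.integrable T μ
  have heq : (fun x => |Dm T μ n x|) ^ k = fun x => |Dm T μ n x| ^ k := by
    funext x; simp
  rwa [heq] at this

/-- per-node zero integral of the martingale difference -/
lemma setIntegral_Dm_node {x₀ : EuclideanSpace ℝ (Fin d)} (hx₀ : x₀ ∈ unitCube d) (n : ℕ) :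
    ∫ x in T.node n x₀, Dm T μ n x ∂μ = 0 := by
  rw [setIntegral_node_eq_sum T μ hx₀ n (Dm_integrable T μ n)]
  rw [Finset.sum_congr rfl (fun c' hc' => setIntegral_Dm_child T μ hx₀ hc')]
  exact alg_zero (chFinset T hx₀ n) (fun c' => (μ (cubeSet c'.1 c'.2)).toReal)
    (μ (T.node n x₀)).toReal (treeEntropy μ T n x₀)
    (fun c _ => ENNReal.toReal_nonneg) (q_eq_sum T μ hx₀ n).symm
    (entropy_formula T μ hx₀ n)

/-- per-node moment bound -/
lemma setIntegral_pow_Dm_node (hδ : 0 < δ) {x₀ : EuclideanSpace ℝ (Fin d)}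
    (hx₀ : x₀ ∈ unitCube d) (n : ℕ) {k : ℕ} (hk : 1 ≤ k) :
    ∫ x in T.node n x₀, |Dm T μ n x| ^ k ∂μ ≤ Kc d δ k * (μ (T.node n x₀)).toReal := by
  rw [setIntegral_node_eq_sum T μ hx₀ n (abs_pow_Dm_integrable T μ n k (by omega))]
  rw [Finset.sum_congr rfl (fun c' hc' => setIntegral_pow_Dm_child T μ hx₀ hc' k)]
  have hM1 : (1:ℝ) ≤ δ⁻¹ ^ d := by
    have hδhalf : δ ≤ 1 - δ := by
      have h0 : (0 : EuclideanSpace ℝ (Fin d)) ∈ unitCube d := by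
        intro j; norm_num
      have := T.regular 0 0 h0
      linarith
    have : 1 ≤ δ⁻¹ := by
      rw [le_inv_comm₀ one_pos hδ]
      linarith
    exact one_le_pow₀ this
  exact alg_mom (chFinset T hx₀ n) (fun c' => (μ (cubeSet c'.1 c'.2)).toReal)
    (μ (T.node n x₀)).toReal (treeEntropy μ T n x₀) (δ⁻¹ ^ d) k hk
    (fun c _ => ENNReal.toReal_nonneg)
    (fun c hc => ENNReal.toReal_mono (measure_ne_top μ _)
      (measure_mono (child_subset_node T hx₀ hc)))
    (q_eq_sum T μ hx₀ n).symm (entropy_formula T μ hx₀ n)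
    (card_children_le T hδ hx₀ n) hM1

end TreeLLN
namespace TreeLLN

variable {d : ℕ} {δ : ℝ} (T : CubeTree d δ)
variable (μ : Measure (EuclideanSpace ℝ (Fin d))) [IsProbabilityMeasure μ]

lemma measurableSet_node (n : ℕ) (x : EuclideanSpace ℝ (Fin d)) :
    MeasurableSet (T.node n x) := measurableSet_cubeSet _ _

lemma integral_eq_sum_FnLev (n : ℕ) {f : EuclideanSpace ℝ (Fin d) → ℝ}
    (hf : Integrable f μ) (hvan : ∀ x ∉ unitCube d, f x = 0) :
    ∫ x, f x ∂μ = ∑ c ∈ FnLev T n, ∫ x in cubeSet c.1 c.2, f x ∂μ := by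
  rw [← setIntegral_eq_integral_of_forall_compl_eq_zero hvan, ← FnLev_cover T n]
  exact integral_biUnion_finset _ (fun c _ => measurableSet_cubeSet c.1 c.2)
    (FnLev_pairwiseDisjoint T n) (fun c _ => hf.integrableOn)

lemma integral_mul_Dm (n : ℕ) {g : EuclideanSpace ℝ (Fin d) → ℝ} (hg : Lsimple T n g) :
    ∫ x, g x * Dm T μ n x ∂μ = 0 := by
  have hprod : Lsimple T (n+1) (g * Dm T μ n) :=
    (hg.mono T (Nat.le_succ n)).mul T (Lsimple_Dm T μ n)
  have hint : Integrable (fun x => g x * Dm T μ n x) μ := hprod.integrable T μ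
  rw [integral_eq_sum_FnLev T μ n hint (fun x hx => by
    simp [hg.1 x hx])]
  apply Finset.sum_eq_zero
  intro c hc
  obtain ⟨x₀, hx₀, hcube⟩ := rep_spec T hc
  rw [hcube]
  rw [setIntegral_congr_fun (measurableSet_node T n x₀)
    (g := fun z => g x₀ * Dm T μ n z) (fun z hz => by rw [hg.2 x₀ hx₀ z hz]),
    integral_const_mul, setIntegral_Dm_node T μ hx₀ n, mul_zero]

lemma Kc_nonneg (hδ : 0 < δ) (k : ℕ) : 0 ≤ Kc d δ k := by
  have : (0:ℝ) < δ⁻¹ := by positivity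
  unfold Kc
  positivity

lemma integral_mul_pow_Dm_le (hδ : 0 < δ) (n : ℕ) {k : ℕ} (hk : 1 ≤ k)
    {g : EuclideanSpace ℝ (Fin d) → ℝ} (hg : Lsimple T n g) (hg0 : ∀ x, 0 ≤ g x) :
    ∫ x, g x * |Dm T μ n x| ^ k ∂μ ≤ Kc d δ k * ∫ x, g x ∂μ := by
  have habs : Lsimple T (n+1) ((fun x => |Dm T μ n x|) ^ k) :=
    ((Lsimple_Dm T μ n).abs T).pow T (by omega)
  have hprod : Lsimple T (n+1) (g * (fun x => |Dm T μ n x|) ^ k) :=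
    (hg.mono T (Nat.le_succ n)).mul T habs
  have hint : Integrable (fun x => g x * |Dm T μ n x| ^ k) μ := by
    have := hprod.integrable T μ
    have heq : g * (fun x => |Dm T μ n x|) ^ k = fun x => g x * |Dm T μ n x| ^ k := by
      funext x; simp
    rwa [heq] at this
  rw [integral_eq_sum_FnLev T μ n hint (fun x hx => by simp [hg.1 x hx]),
    integral_eq_sum_FnLev T μ n (hg.integrable T μ) hg.1, Finset.mul_sum]
  apply Finset.sum_le_sum
  intro c hc
  obtain ⟨x₀, hx₀, hcube⟩ := rep_spec T hc
  rw [hcube]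
  have e1 : ∫ x in T.node n x₀, g x * |Dm T μ n x| ^ k ∂μ
      = g x₀ * ∫ x in T.node n x₀, |Dm T μ n x| ^ k ∂μ := by
    rw [setIntegral_congr_fun (measurableSet_node T n x₀)
      (g := fun z => g x₀ * |Dm T μ n z| ^ k) (fun z hz => by rw [hg.2 x₀ hx₀ z hz]),
      integral_const_mul]
  have e2 : ∫ x in T.node n x₀, g x ∂μ = (μ (T.node n x₀)).toReal * g x₀ := by
    rw [setIntegral_congr_fun (measurableSet_node T n x₀)
      (g := fun _ => g x₀) (fun z hz => hg.2 x₀ hx₀ z hz), setIntegral_const, smul_eq_mul, measureReal_def]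
  rw [e1, e2]
  calc g x₀ * ∫ x in T.node n x₀, |Dm T μ n x| ^ k ∂μ
      ≤ g x₀ * (Kc d δ k * (μ (T.node n x₀)).toReal) :=
        mul_le_mul_of_nonneg_left (setIntegral_pow_Dm_node T μ hδ hx₀ n hk) (hg0 x₀)
    _ = Kc d δ k * ((μ (T.node n x₀)).toReal * g x₀) := by ring

/-- The indicator of the unit cube. -/
noncomputable def oneU (d : ℕ) : EuclideanSpace ℝ (Fin d) → ℝ :=
  (unitCube d).indicator (fun _ => (1:ℝ))

lemma Lsimple_oneU (n : ℕ) : Lsimple T n (oneU d) := by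
  constructor
  · intro x hx; exact Set.indicator_of_notMem hx _
  · intro x hx y hy
    rw [oneU, Set.indicator_of_mem (mem_unitCube_of_mem_node T hx hy),
      Set.indicator_of_mem hx]

lemma integral_oneU (hsupp : μ (unitCube d) = 1) : ∫ x, oneU d x ∂μ = 1 := by
  rw [oneU, integral_indicator_const _ measurableSet_unitCube, measureReal_def, hsupp]
  simp

lemma integral_pow_Dm_le (hδ : 0 < δ) (hsupp : μ (unitCube d) = 1) (n : ℕ)
    {k : ℕ} (hk : 1 ≤ k) :
    ∫ x, |Dm T μ n x| ^ k ∂μ ≤ Kc d δ k := by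
  have h := integral_mul_pow_Dm_le T μ hδ n hk (Lsimple_oneU T n) (fun x => by
    rw [oneU]
    by_cases hx : x ∈ unitCube d <;> simp [hx])
  rw [integral_oneU μ hsupp, mul_one] at h
  refine le_trans (le_of_eq ?_) h
  apply integral_congr_ae
  apply Filter.Eventually.of_forall
  intro x
  by_cases hx : x ∈ unitCube d
  · simp [oneU, hx]
  · have : Dm T μ n x = 0 := Set.indicator_of_notMem hx _
    simp [oneU, hx, this, zero_pow (show k ≠ 0 by omega)]

end TreeLLN
namespace TreeLLN

variable {d : ℕ} {δ : ℝ} (T : CubeTree d δ)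
variable (μ : Measure (EuclideanSpace ℝ (Fin d))) [IsProbabilityMeasure μ]

noncomputable def KK (d : ℕ) (δ : ℝ) : ℝ := Kc d δ 2 + Kc d δ 3 + Kc d δ 4 + 1
noncomputable def CC (d : ℕ) (δ : ℝ) : ℝ := 5 * KK d δ ^ 2 + 5 * KK d δ

lemma one_le_KK (hδ : 0 < δ) : 1 ≤ KK d δ := by
  have h2 := Kc_nonneg (d := d) hδ 2
  have h3 := Kc_nonneg (d := d) hδ 3
  have h4 := Kc_nonneg (d := d) hδ 4
  unfold KK; linarith

lemma Kc2_le_KK (hδ : 0 < δ) : Kc d δ 2 ≤ KK d δ := by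
  have h3 := Kc_nonneg (d := d) hδ 3
  have h4 := Kc_nonneg (d := d) hδ 4
  unfold KK; linarith

lemma Kc3_le_KK (hδ : 0 < δ) : Kc d δ 3 ≤ KK d δ := by
  have h2 := Kc_nonneg (d := d) hδ 2
  have h4 := Kc_nonneg (d := d) hδ 4
  unfold KK; linarith

lemma Kc4_le_KK (hδ : 0 < δ) : Kc d δ 4 ≤ KK d δ := by
  have h2 := Kc_nonneg (d := d) hδ 2
  have h3 := Kc_nonneg (d := d) hδ 3
  unfold KK; linarith

lemma Sm_succ_apply (n : ℕ) (x : EuclideanSpace ℝ (Fin d)) :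
    Sm T μ (n+1) x = Sm T μ n x + Dm T μ n x := Finset.sum_range_succ _ n

lemma Lsimple_Sm_pow (n : ℕ) {k : ℕ} (hk : k ≠ 0) :
    Lsimple T n (fun x => Sm T μ n x ^ k) := (Lsimple_Sm T μ n).pow T hk

lemma integrable_Sm_pow (n : ℕ) {k : ℕ} (hk : k ≠ 0) :
    Integrable (fun x => Sm T μ n x ^ k) μ :=
  (Lsimple_Sm_pow T μ n hk).integrable T μ

lemma integrable_Sm_pow_mul_Dm_pow (n : ℕ) {j k : ℕ} (hj : j ≠ 0) (hk : k ≠ 0) :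
    Integrable (fun x => Sm T μ n x ^ j * Dm T μ n x ^ k) μ := by
  have h : Lsimple T (n+1) (fun x => Sm T μ n x ^ j * Dm T μ n x ^ k) :=
    (((Lsimple_Sm T μ n).pow T hj).mono T (Nat.le_succ n)).mul T ((Lsimple_Dm T μ n).pow T hk)
  exact h.integrable T μ

lemma integrable_Sm_mul_Dm (n : ℕ) :
    Integrable (fun x => Sm T μ n x * Dm T μ n x) μ := by
  have h : Lsimple T (n+1) (fun x => Sm T μ n x * Dm T μ n x) :=
    ((Lsimple_Sm T μ n).mono T (Nat.le_succ n)).mul T (Lsimple_Dm T μ n)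
  exact h.integrable T μ

lemma integrable_Sm_sq_mul_absDm_sq (n : ℕ) :
    Integrable (fun x => Sm T μ n x ^ 2 * |Dm T μ n x| ^ 2) μ := by
  have h : Lsimple T (n+1) (fun x => Sm T μ n x ^ 2 * |Dm T μ n x| ^ 2) :=
    (((Lsimple_Sm T μ n).pow T two_ne_zero).mono T (Nat.le_succ n)).mul T
      (((Lsimple_Dm T μ n).abs T).pow T two_ne_zero)
  exact h.integrable T μ

lemma integrable_absDm_pow (n : ℕ) {k : ℕ} (hk : k ≠ 0) :
    Integrable (fun x => |Dm T μ n x| ^ k) μ := abs_pow_Dm_integrable T μ n k hk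

lemma integrable_absSm (n : ℕ) : Integrable (fun x => |Sm T μ n x|) μ :=
  ((Lsimple_Sm T μ n).abs T).integrable T μ

/-- Second moment bound. -/
lemma A_bound (hδ : 0 < δ) (hsupp : μ (unitCube d) = 1) (n : ℕ) :
    ∫ x, Sm T μ n x ^ 2 ∂μ ≤ KK d δ * n := by
  induction n with
  | zero => simp [Sm]
  | succ n ih =>
    have hKK := one_le_KK (d := d) hδ
    have hexp : (fun x => Sm T μ (n+1) x ^ 2)
        = fun x => Sm T μ n x ^ 2 + (2 * (Sm T μ n x * Dm T μ n x) + |Dm T μ n x| ^ 2) := by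
      funext x
      rw [Sm_succ_apply, sq_abs]
      ring
    rw [hexp]
    have h1 : Integrable (fun x => Sm T μ n x ^ 2) μ := integrable_Sm_pow T μ n two_ne_zero
    have h2 : Integrable (fun x => 2 * (Sm T μ n x * Dm T μ n x)) μ :=
      (integrable_Sm_mul_Dm T μ n).const_mul 2
    have h3 : Integrable (fun x => |Dm T μ n x| ^ 2) μ :=
      integrable_absDm_pow T μ n two_ne_zero
    have h23 : Integrable (fun x => 2 * (Sm T μ n x * Dm T μ n x) + |Dm T μ n x| ^ 2) μ :=
      h2.add h3
    rw [integral_add h1 h23, integral_add h2 h3, integral_const_mul,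
      integral_mul_Dm T μ n (Lsimple_Sm T μ n), mul_zero, zero_add]
    have h4 : ∫ x, |Dm T μ n x| ^ 2 ∂μ ≤ KK d δ :=
      (integral_pow_Dm_le T μ hδ hsupp n one_le_two).trans (Kc2_le_KK hδ)
    push_cast
    linarith

lemma absSm_int_le (hδ : 0 < δ) (hsupp : μ (unitCube d) = 1) (n : ℕ) :
    ∫ x, |Sm T μ n x| ∂μ ≤ 1 + ∫ x, Sm T μ n x ^ 2 ∂μ := by
  have h1 : Integrable (fun x => (1:ℝ) + Sm T μ n x ^ 2) μ :=
    (integrable_const 1).add (integrable_Sm_pow T μ n two_ne_zero)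
  have h := integral_mono (integrable_absSm T μ n) h1 (fun x => by
    have h' : |Sm T μ n x| ≤ 1 + Sm T μ n x ^ 2 := by
      rcases le_total (|Sm T μ n x|) 1 with h' | h'
      · nlinarith [sq_nonneg (Sm T μ n x)]
      · nlinarith [sq_abs (Sm T μ n x), abs_nonneg (Sm T μ n x)]
    exact h')
  rwa [integral_add (integrable_const 1) (integrable_Sm_pow T μ n two_ne_zero),
    integral_const, measureReal_def, measure_univ, ENNReal.toReal_one, smul_eq_mul, mul_one] at h

/-- Fourth moment bound. -/
lemma B_bound (hδ : 0 < δ) (hsupp : μ (unitCube d) = 1) (n : ℕ) :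
    ∫ x, Sm T μ n x ^ 4 ∂μ ≤ CC d δ * n ^ 2 := by
  induction n with
  | zero => simp [Sm, CC]
  | succ n ih =>
    have hKK := one_le_KK (d := d) hδ
    have hexp : (fun x => Sm T μ (n+1) x ^ 4)
        = fun x => Sm T μ n x ^ 4 + (4 * (Sm T μ n x ^ 3 * Dm T μ n x)
          + (6 * (Sm T μ n x ^ 2 * |Dm T μ n x| ^ 2)
          + (4 * (Sm T μ n x * Dm T μ n x ^ 3) + |Dm T μ n x| ^ 4))) := by
      funext x
      rw [Sm_succ_apply, Even.pow_abs (⟨2, rfl⟩ : Even 4), Even.pow_abs (⟨1, rfl⟩ : Even 2)]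
      ring
    rw [hexp]
    have h1 : Integrable (fun x => Sm T μ n x ^ 4) μ :=
      integrable_Sm_pow T μ n (by norm_num)
    have h2 : Integrable (fun x => 4 * (Sm T μ n x ^ 3 * Dm T μ n x)) μ := by
      have := (integrable_Sm_pow_mul_Dm_pow T μ n (j := 3) (k := 1) (by norm_num) one_ne_zero)
      simp only [pow_one] at this
      exact this.const_mul 4
    have h3 : Integrable (fun x => 6 * (Sm T μ n x ^ 2 * |Dm T μ n x| ^ 2)) μ :=
      (integrable_Sm_sq_mul_absDm_sq T μ n).const_mul 6
    have h4 : Integrable (fun x => 4 * (Sm T μ n x * Dm T μ n x ^ 3)) μ := by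
      have := integrable_Sm_pow_mul_Dm_pow T μ n (j := 1) (k := 3) one_ne_zero (by norm_num)
      simp only [pow_one] at this
      exact this.const_mul 4
    have h5 : Integrable (fun x => |Dm T μ n x| ^ 4) μ :=
      integrable_absDm_pow T μ n (by norm_num)
    have h45 : Integrable (fun x => 4 * (Sm T μ n x * Dm T μ n x ^ 3) + |Dm T μ n x| ^ 4) μ :=
      h4.add h5
    have h345 : Integrable (fun x => 6 * (Sm T μ n x ^ 2 * |Dm T μ n x| ^ 2)
        + (4 * (Sm T μ n x * Dm T μ n x ^ 3) + |Dm T μ n x| ^ 4)) μ := h3.add h45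
    have h2345 : Integrable (fun x => 4 * (Sm T μ n x ^ 3 * Dm T μ n x)
        + (6 * (Sm T μ n x ^ 2 * |Dm T μ n x| ^ 2)
        + (4 * (Sm T μ n x * Dm T μ n x ^ 3) + |Dm T μ n x| ^ 4))) μ := h2.add h345
    rw [integral_add h1 h2345, integral_add h2 h345, integral_add h3 h45, integral_add h4 h5,
      integral_const_mul, integral_const_mul, integral_const_mul]
    -- term 2 : zero
    have e2 : ∫ x, Sm T μ n x ^ 3 * Dm T μ n x ∂μ = 0 :=
      integral_mul_Dm T μ n (Lsimple_Sm_pow T μ n (by norm_num))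
    -- term 3
    have hA := A_bound T μ hδ hsupp n
    have hA0 : 0 ≤ ∫ x, Sm T μ n x ^ 2 ∂μ :=
      integral_nonneg fun x => sq_nonneg _
    have e3 : ∫ x, Sm T μ n x ^ 2 * |Dm T μ n x| ^ 2 ∂μ ≤ KK d δ * (KK d δ * n) := by
      have := integral_mul_pow_Dm_le T μ hδ n one_le_two
        (Lsimple_Sm_pow T μ n two_ne_zero) (fun x => sq_nonneg _)
      calc ∫ x, Sm T μ n x ^ 2 * |Dm T μ n x| ^ 2 ∂μ
          ≤ Kc d δ 2 * ∫ x, Sm T μ n x ^ 2 ∂μ := this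
        _ ≤ KK d δ * (KK d δ * n) := by
            apply mul_le_mul (Kc2_le_KK hδ) hA hA0 (by linarith)
    -- term 4
    have e4 : ∫ x, Sm T μ n x * Dm T μ n x ^ 3 ∂μ ≤ KK d δ * (1 + KK d δ * n) := by
      have habs : ∫ x, Sm T μ n x * Dm T μ n x ^ 3 ∂μ
          ≤ ∫ x, |Sm T μ n x| * |Dm T μ n x| ^ 3 ∂μ := by
        have h := le_trans (le_abs_self _)
          (norm_integral_le_integral_norm (fun x => Sm T μ n x * Dm T μ n x ^ 3) (μ := μ))
        refine h.trans (le_of_eq ?_)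
        apply integral_congr_ae (Filter.Eventually.of_forall fun x => ?_)
        rw [Real.norm_eq_abs, abs_mul, abs_pow]
      have hmul : ∫ x, |Sm T μ n x| * |Dm T μ n x| ^ 3 ∂μ
          ≤ Kc d δ 3 * ∫ x, |Sm T μ n x| ∂μ :=
        integral_mul_pow_Dm_le T μ hδ n (by norm_num)
          ((Lsimple_Sm T μ n).abs T) (fun x => abs_nonneg _)
      have habsS : ∫ x, |Sm T μ n x| ∂μ ≤ 1 + KK d δ * n :=
        (absSm_int_le T μ hδ hsupp n).trans (by linarith)
      have habsS0 : 0 ≤ ∫ x, |Sm T μ n x| ∂μ := integral_nonneg fun x => abs_nonneg _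
      calc ∫ x, Sm T μ n x * Dm T μ n x ^ 3 ∂μ
          ≤ Kc d δ 3 * ∫ x, |Sm T μ n x| ∂μ := habs.trans hmul
        _ ≤ KK d δ * (1 + KK d δ * n) :=
            mul_le_mul (Kc3_le_KK hδ) habsS habsS0 (by linarith)
    -- term 5
    have e5 : ∫ x, |Dm T μ n x| ^ 4 ∂μ ≤ KK d δ :=
      (integral_pow_Dm_le T μ hδ hsupp n (by norm_num)).trans (Kc4_le_KK hδ)
    rw [e2, mul_zero, zero_add]
    unfold CC at ih ⊢
    push_cast
    nlinarith [hA0, hKK, e3, e4, e5, ih, sq_nonneg (KK d δ), sq_nonneg ((n:ℝ)),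
      mul_nonneg (mul_nonneg (by linarith : (0:ℝ) ≤ KK d δ) (by linarith : (0:ℝ) ≤ KK d δ)) (Nat.cast_nonneg n)]

end TreeLLN
namespace TreeLLN

variable {d : ℕ} {δ : ℝ} (T : CubeTree d δ)
variable (μ : Measure (EuclideanSpace ℝ (Fin d))) [IsProbabilityMeasure μ]

lemma CC_pos (hδ : 0 < δ) : 0 < CC d δ := by
  have := one_le_KK (d := d) hδ
  unfold CC; nlinarith

/-- Chebyshev bound for the partial sums. -/
lemma meas_ge_le (hδ : 0 < δ) (hsupp : μ (unitCube d) = 1) {ε : ℝ} (hε : 0 < ε)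
    {n : ℕ} (hn : 1 ≤ n) :
    μ {x | ε * n ≤ |Sm T μ n x|} ≤ ENNReal.ofReal (CC d δ / (ε ^ 4 * n ^ 2)) := by
  have hB := B_bound T μ hδ hsupp n
  have hint := integrable_Sm_pow T μ n (show (4:ℕ) ≠ 0 by norm_num)
  have hnpos : (0:ℝ) < n := by exact_mod_cast hn
  have hmk := mul_meas_ge_le_integral_of_nonneg
    (ae_of_all μ (fun x => by positivity : ∀ x, 0 ≤ Sm T μ n x ^ 4)) hint ((ε * n) ^ 4)
  have hsub : {x | ε * n ≤ |Sm T μ n x|} ⊆ {x | (ε * n) ^ 4 ≤ Sm T μ n x ^ 4} := by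
    intro x hx
    have h1 : (ε * n) ^ 4 ≤ |Sm T μ n x| ^ 4 :=
      pow_le_pow_left₀ (by positivity) hx 4
    rwa [Even.pow_abs (⟨2, rfl⟩ : Even 4)] at h1
  have hmono : (μ {x | ε * n ≤ |Sm T μ n x|}).toReal
      ≤ (μ {x | (ε * n) ^ 4 ≤ Sm T μ n x ^ 4}).toReal :=
    ENNReal.toReal_mono (measure_ne_top μ _) (measure_mono hsub)
  rw [measureReal_def] at hmk
  have hpow : (0:ℝ) < (ε * n) ^ 4 := by positivity
  set a := (μ {x | ε * n ≤ |Sm T μ n x|}).toReal with ha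
  set b := (μ {x | (ε * n) ^ 4 ≤ Sm T μ n x ^ 4}).toReal with hb
  have hb0 : 0 ≤ b := ENNReal.toReal_nonneg
  have hn2 : (0:ℝ) < (n:ℝ) ^ 2 := by positivity
  have h1 : b * (ε ^ 4 * (n:ℝ) ^ 4) ≤ CC d δ * (n:ℝ) ^ 2 := by nlinarith [hmk, hB]
  have h2 : b * (ε ^ 4 * (n:ℝ) ^ 2) ≤ CC d δ := by nlinarith [h1, hn2]
  have key : a ≤ CC d δ / (ε ^ 4 * n ^ 2) := by
    rw [le_div_iff₀ (mul_pos (by positivity) hn2)]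
    calc a * (ε ^ 4 * (n:ℝ) ^ 2) ≤ b * (ε ^ 4 * (n:ℝ) ^ 2) :=
          mul_le_mul_of_nonneg_right hmono (by positivity)
      _ ≤ CC d δ := h2
  have hne : μ {x | ε * n ≤ |Sm T μ n x|} ≠ ⊤ := measure_ne_top μ _
  have hCC := (CC_pos (d := d) hδ).le
  rw [ENNReal.le_ofReal_iff_toReal_le hne (by
    apply div_nonneg hCC (le_of_lt (mul_pos (by positivity) hn2)))]
  exact key

end TreeLLN
namespace TreeLLN

variable {d : ℕ} {δ : ℝ} (T : CubeTree d δ)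
variable (μ : Measure (EuclideanSpace ℝ (Fin d))) [IsProbabilityMeasure μ]

lemma tsum_meas_ne_top (hδ : 0 < δ) (hsupp : μ (unitCube d) = 1) {ε : ℝ} (hε : 0 < ε) :
    (∑' n : ℕ, μ {x | ε * n ≤ |Sm T μ n x|}) ≠ ⊤ := by
  have hsummable : Summable (fun n : ℕ => CC d δ / ε ^ 4 * (1 / ((n:ℝ) + 1) ^ 2)) := by
    apply Summable.mul_left
    have h0 : Summable (fun n : ℕ => 1 / (n:ℝ) ^ 2) :=
      Real.summable_one_div_nat_pow.mpr one_lt_two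
    have h1 := (summable_nat_add_iff 1).mpr h0
    apply h1.congr
    intro n
    push_cast
    ring
  have hbound : ∀ n : ℕ, μ {x | ε * (n+1:ℕ) ≤ |Sm T μ (n+1) x|}
      ≤ ENNReal.ofReal (CC d δ / ε ^ 4 * (1 / ((n:ℝ) + 1) ^ 2)) := by
    intro n
    have h := meas_ge_le T μ hδ hsupp hε (n := n + 1) (Nat.le_add_left 1 n)
    refine h.trans (le_of_eq ?_)
    congr 1
    push_cast
    field_simp
  rw [tsum_eq_zero_add' ENNReal.summable]
  apply ENNReal.add_ne_top.mpr
  constructor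
  · exact measure_ne_top μ _
  · have h2 : (∑' n : ℕ, μ {x | ε * ((n+1:ℕ):ℝ) ≤ |Sm T μ (n+1) x|})
        ≤ ∑' n : ℕ, ENNReal.ofReal (CC d δ / ε ^ 4 * (1 / ((n:ℝ) + 1) ^ 2)) :=
      ENNReal.tsum_le_tsum hbound
    have h3 : (∑' n : ℕ, ENNReal.ofReal (CC d δ / ε ^ 4 * (1 / ((n:ℝ) + 1) ^ 2))) ≠ ⊤ := by
      rw [← ENNReal.ofReal_tsum_of_nonneg (fun n =>
        mul_nonneg (div_nonneg (CC_pos (d := d) hδ).le (by positivity)) (by positivity))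
        hsummable]
      exact ENNReal.ofReal_ne_top
    exact ne_top_of_le_ne_top h3 h2

theorem main (hd : 1 ≤ d) (hδ : 0 < δ) (hsupp : μ (unitCube d) = 1) :
    ∀ᵐ x ∂μ, Filter.Tendsto (fun n : ℕ =>
      (1 / (n : ℝ)) * (Real.log (1 / (μ (T.node n x)).toReal)
        - ∑ i ∈ Finset.range n, treeEntropy μ T i x))
      Filter.atTop (nhds 0) := by
  have hU : ∀ᵐ x ∂μ, x ∈ unitCube d := by
    rw [ae_iff]
    have hcompl : μ (unitCube d)ᶜ = 0 := by
      rw [measure_compl measurableSet_unitCube (measure_ne_top μ _), hsupp, measure_univ]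
      simp
    exact hcompl
  have hBC : ∀ᵐ x ∂μ, ∀ k : ℕ, ∀ᶠ n in Filter.atTop,
      x ∉ {y | (1 / ((k:ℝ) + 1)) * n ≤ |Sm T μ n y|} := by
    rw [MeasureTheory.ae_all_iff]
    intro k
    exact ae_eventually_notMem
      (tsum_meas_ne_top T μ hδ hsupp (ε := 1 / ((k:ℝ) + 1)) (by positivity))
  filter_upwards [hU, hBC] with x hxU hx
  -- identify the expression with the partial sums
  have key : ∀ n : ℕ, Real.log (1 / (μ (T.node n x)).toReal)
      - ∑ i ∈ Finset.range n, treeEntropy μ T i x = Sm T μ n x := by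
    intro n
    have hDm : ∀ i : ℕ, Dm T μ i x
        = (Real.log (μ (T.node i x)).toReal - Real.log (μ (T.node (i+1) x)).toReal)
          - treeEntropy μ T i x := fun i => by
      rw [Dm, Set.indicator_of_mem hxU, Df]
    have hSm : Sm T μ n x = (Real.log (μ (T.node 0 x)).toReal
        - Real.log (μ (T.node n x)).toReal) - ∑ i ∈ Finset.range n, treeEntropy μ T i x := by
      show (∑ i ∈ Finset.range n, Dm T μ i x) = _
      rw [Finset.sum_congr rfl (fun i _ => hDm i), Finset.sum_sub_distrib,
        Finset.sum_range_sub' (fun i => Real.log (μ (T.node i x)).toReal) n]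
    have hL0 : Real.log (μ (T.node 0 x)).toReal = 0 := by
      rw [node_zero T hxU, hsupp]
      simp
    rw [one_div, Real.log_inv, hSm, hL0]
    ring
  have hfun : (fun n : ℕ => (1 / (n : ℝ)) * (Real.log (1 / (μ (T.node n x)).toReal)
      - ∑ i ∈ Finset.range n, treeEntropy μ T i x))
      = fun n : ℕ => (1 / (n : ℝ)) * Sm T μ n x := by
    funext n
    rw [key n]
  rw [hfun]
  -- now the convergence
  rw [Metric.tendsto_atTop]
  intro ε hε
  obtain ⟨k, hk⟩ := exists_nat_one_div_lt hε
  obtain ⟨N, hN⟩ := Filter.eventually_atTop.mp (hx k)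
  refine ⟨max N 1, fun n hn => ?_⟩
  have hn1 : 1 ≤ n := le_trans (le_max_right N 1) hn
  have hnN : N ≤ n := le_trans (le_max_left N 1) hn
  have hnot := hN n hnN
  simp only [Set.mem_setOf_eq, not_le] at hnot
  have hnpos : (0:ℝ) < n := by exact_mod_cast hn1
  rw [Real.dist_eq, sub_zero, abs_mul, abs_of_pos (by positivity : (0:ℝ) < 1 / (n:ℝ))]
  calc 1 / (n:ℝ) * |Sm T μ n x| < 1 / (n:ℝ) * (1 / ((k:ℝ) + 1) * n) := by
        apply mul_lt_mul_of_pos_left hnot (by positivity)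
    _ = 1 / ((k:ℝ) + 1) := by field_simp
    _ < ε := hk

end TreeLLN

/-- For a `δ`-regular tree of cubes `R*` with root `[0,1)^d` and a Borel
probability measure `μ` on `[0,1)^d`, for `μ`-a.e. `x`,
`(1/n)·(log(1/μ(R_n(x))) − Σ_{i<n} H(R_i(x))) → 0`. -/
theorem tree_entropy_lln (d : ℕ) (hd : 1 ≤ d) (δ : ℝ) (hδ : 0 < δ)
    (T : CubeTree d δ) (μ : Measure (EuclideanSpace ℝ (Fin d))) [IsProbabilityMeasure μ]
    (hsupp : μ (unitCube d) = 1) :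
    ∀ᵐ x ∂μ, Filter.Tendsto (fun n : ℕ =>
      (1 / (n : ℝ)) * (Real.log (1 / (μ (T.node n x)).toReal)
        - ∑ i ∈ Finset.range n, treeEntropy μ T i x))
      Filter.atTop (nhds 0) := by
  exact TreeLLN.main T μ hd hδ hsupp
end
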